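/- arXiv:2403.10111 — 2 statements merged into one kernel-verified Lean document; each statement's English description precedes it below -/
import Mathlib

section
/- Exponential contraction in Wasserstein distance for the discrete-time scheme (Theorem 4.3): assume (A3) and set κ₁ = min{κ₊(i,j)+κ₋(i+he_j,j) : j=1,…,d, i,i+he_j∈𝒦_h}. Then for all probability measures ν,η on 𝒦_h and all n∈ℕ: W_{d,1}(νπ^n, ηπ^n) ≤ e^{−κ₁ n τ}·W_{d,1}(ν,η) and W₁(νπ^n, ηπ^n) ≤ √d·e^{−κ₁ n τ}·W₁(ν,η). -/
open scoped BigOperators Classical RealInnerProductSpace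
open Finset MeasureTheory

noncomputable section

/-- Points of the state space `ℝᵈ` with the Euclidean norm. -/
abbrev Pt (d : ℕ) : Type := EuclideanSpace ℝ (Fin d)

/-- The set `G` of moves `+_j`, `-_j`. -/
inductive Move (d : ℕ) : Type where
  | pos : Fin d → Move d
  | neg : Fin d → Move d
  deriving DecidableEq, Fintype

namespace Move

/-- The direction of a move. -/
def dir {d : ℕ} : Move d → Fin d
  | pos j => j
  | neg j => j

/-- Action of a move on `ℝᵈ`: `(±_j) x = x ± h eⱼ`. -/
def act {d : ℕ} (h : ℝ) : Move d → Pt d → Pt d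
  | pos j, x => x + EuclideanSpace.single j h
  | neg j, x => x - EuclideanSpace.single j h

end Move

/-- Action of a move in `G ∪ {e}` (`none` is the null move `e`). -/
def actO {d : ℕ} (h : ℝ) : Option (Move d) → Pt d → Pt d
  | none, x => x
  | some γ, x => γ.act h x

/-- The grid `𝒦_h` of cell centers, where `N = 2K/h`. -/
def grid (d : ℕ) (K h : ℝ) (N : ℕ) : Finset (Pt d) :=
  Finset.image
    (fun n : Fin d → Fin N =>
      (EuclideanSpace.equiv (Fin d) ℝ).symm fun j => -K + h * ((n j : ℕ) + 1) - h / 2)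
    Finset.univ

/-- The averaged potential `V^h`. -/
def Vh {d : ℕ} (h : ℝ) (V : Pt d → ℝ) (x : Pt d) : ℝ :=
  (1 / h ^ d) * ∫ s in {s : Pt d | ∀ j, s j ∈ Set.Icc (-(h / 2)) (h / 2)}, V (x + s)

/-- The one-dimensional averaged potential `V_j^h`. -/
def Vjh (h : ℝ) (W : ℝ → ℝ) (x : ℝ) : ℝ :=
  (1 / h) * ∫ s in Set.Icc (-(h / 2)) (h / 2), W (x + s)

/-- The transition rates `c(x, γ)`. -/
def rate (d : ℕ) (K h σ : ℝ) (N : ℕ) (V : Pt d → ℝ) (x : Pt d) (γ : Move d) : ℝ :=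
  if x ∈ grid d K h N ∧ γ.act h x ∈ grid d K h N then
    σ ^ 2 / h ^ 2 * Real.exp (-(Vh h V (γ.act h x) - Vh h V x) / (2 * σ ^ 2))
  else 0

/-- The generator `L_h`. -/
def gen (d : ℕ) (K h σ : ℝ) (N : ℕ) (V : Pt d → ℝ) (f : Pt d → ℝ) (i : Pt d) : ℝ :=
  ∑ γ : Move d, rate d K h σ N V i γ * (f (γ.act h i) - f i)

/-- The normalization constant `Z`. -/
def Znorm (d : ℕ) (K h σ : ℝ) (N : ℕ) (V : Pt d → ℝ) : ℝ :=
  ∑ k ∈ grid d K h N, Real.exp (-Vh h V k / σ ^ 2)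

/-- The invariant measure `m_h`. -/
def mh (d : ℕ) (K h σ : ℝ) (N : ℕ) (V : Pt d → ℝ) (i : Pt d) : ℝ :=
  Real.exp (-Vh h V i / σ ^ 2) / Znorm d K h σ N V

/-- `κ₊(i,j)`. -/
def kplus (d : ℕ) (K h σ : ℝ) (N : ℕ) (V : Pt d → ℝ) (i : Pt d) (j : Fin d) : ℝ :=
  rate d K h σ N V i (Move.pos j) - rate d K h σ N V ((Move.pos j).act h i) (Move.pos j)
    - ∑ γ ∈ Finset.univ.filter fun γ : Move d => γ.dir ≠ j,
        max (rate d K h σ N V ((Move.pos j).act h i) γ - rate d K h σ N V i γ) 0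

/-- `κ₋(i,j)`. -/
def kminus (d : ℕ) (K h σ : ℝ) (N : ℕ) (V : Pt d → ℝ) (i : Pt d) (j : Fin d) : ℝ :=
  rate d K h σ N V i (Move.neg j) - rate d K h σ N V ((Move.neg j).act h i) (Move.neg j)
    - ∑ γ ∈ Finset.univ.filter fun γ : Move d => γ.dir ≠ j,
        max (rate d K h σ N V ((Move.neg j).act h i) γ - rate d K h σ N V i γ) 0

/-- Assumption (A3). -/
def A3 (d : ℕ) (K h σ : ℝ) (N : ℕ) (V : Pt d → ℝ) : Prop :=
  (∀ j : Fin d, ∀ i ∈ grid d K h N, (Move.pos j).act h i ∈ grid d K h N →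
      0 < kplus d K h σ N V i j) ∧
  (∀ j : Fin d, ∀ i ∈ grid d K h N, (Move.neg j).act h i ∈ grid d K h N →
      0 < kminus d K h σ N V i j)

/-- `κ_φ = min {κ₊(i,j) + κ₋(i+heⱼ,j)}`. -/
def kappaPhi (d : ℕ) (K h σ : ℝ) (N : ℕ) (V : Pt d → ℝ) : ℝ :=
  sInf { r : ℝ | ∃ j : Fin d, ∃ i ∈ grid d K h N, (Move.pos j).act h i ∈ grid d K h N ∧
    r = kplus d K h σ N V i j + kminus d K h σ N V ((Move.pos j).act h i) j }

/-- The φ-entropy `H^φ(f | m_h)`. -/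
def entPhi (d : ℕ) (K h σ : ℝ) (N : ℕ) (V : Pt d → ℝ) (φ : ℝ → ℝ) (f : Pt d → ℝ) : ℝ :=
  ∑ i ∈ grid d K h N, φ (f i) * mh d K h σ N V i
    - φ (∑ i ∈ grid d K h N, f i * mh d K h σ N V i)

/-- The Dirichlet form `E(f,g)`. -/
def dirichlet (d : ℕ) (K h σ : ℝ) (N : ℕ) (V : Pt d → ℝ) (f g : Pt d → ℝ) : ℝ :=
  -∑ i ∈ grid d K h N, f i * gen d K h σ N V g i * mh d K h σ N V i

/-- Assumption (A1) on the entropy density `φ`. -/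
def A1 (φ : ℝ → ℝ) : Prop :=
  ContinuousOn φ (Set.Ici 0) ∧ (∀ x ∈ Set.Ici (0 : ℝ), 0 ≤ φ x) ∧
  ConvexOn ℝ (Set.Ici 0) φ ∧
  (∀ x ∈ Set.Ioi (0 : ℝ), DifferentiableAt ℝ φ x) ∧
  ContinuousOn (deriv φ) (Set.Ioi 0) ∧
  ConvexOn ℝ (Set.Ioi 0 ×ˢ Set.Ioi 0)
    (fun p : ℝ × ℝ => (deriv φ p.1 - deriv φ p.2) * (p.1 - p.2))

/-- φ is continuous, nonnegative and convex on `[0,∞)`, and C¹ on `(0,∞)`. -/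
def PhiRegular (φ : ℝ → ℝ) : Prop :=
  ContinuousOn φ (Set.Ici 0) ∧ (∀ x ∈ Set.Ici (0 : ℝ), 0 ≤ φ x) ∧
  ConvexOn ℝ (Set.Ici 0) φ ∧
  (∀ x ∈ Set.Ioi (0 : ℝ), DifferentiableAt ℝ φ x) ∧
  ContinuousOn (deriv φ) (Set.Ioi 0)

/-- `f^φ(x, y) = (φ'(f x) - φ'(f y)) (f x - f y)`. -/
def fphi {d : ℕ} (φ : ℝ → ℝ) (f : Pt d → ℝ) (x y : Pt d) : ℝ :=
  (deriv φ (f x) - deriv φ (f y)) * (f x - f y)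

/-- Coupling rates `𝐜(i, i+heⱼ, γ, γ̄)` for the neighboring pair `(i, i+heⱼ)`. -/
def crate (d : ℕ) (K h σ : ℝ) (N : ℕ) (V : Pt d → ℝ) (i : Pt d) (j : Fin d) :
    Option (Move d) → Option (Move d) → ℝ
  | some a, some b =>
      if a = b then min (rate d K h σ N V i a) (rate d K h σ N V ((Move.pos j).act h i) a)
      else if a = Move.pos j ∧ b.dir ≠ j then
        max (rate d K h σ N V ((Move.pos j).act h i) b - rate d K h σ N V i b) 0
      else if a.dir ≠ j ∧ b = Move.neg j then
        max (rate d K h σ N V i a - rate d K h σ N V ((Move.pos j).act h i) a) 0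
      else 0
  | some a, none => if a = Move.pos j then kplus d K h σ N V i j else 0
  | none, some b => if b = Move.neg j then kminus d K h σ N V ((Move.pos j).act h i) j else 0
  | none, none => 0

/-- Coupling rates `𝐜(i, δ i, γ, γ̄)` for an arbitrary move `δ ∈ G`. -/
def cpl (d : ℕ) (K h σ : ℝ) (N : ℕ) (V : Pt d → ℝ) (i : Pt d) (δ : Move d)
    (γ γb : Option (Move d)) : ℝ :=
  match δ with
  | Move.pos j => crate d K h σ N V i j γ γb
  | Move.neg j => crate d K h σ N V ((Move.neg j).act h i) j γb γ

/-- Synchronous coupling rates `𝐜(i, k, γ, γ̄)`. -/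
def syncRate (d : ℕ) (K h σ : ℝ) (N : ℕ) (V : Pt d → ℝ) (i k : Pt d) :
    Option (Move d) → Option (Move d) → ℝ
  | some a, some b => if a = b then min (rate d K h σ N V i a) (rate d K h σ N V k a) else 0
  | some a, none => max (rate d K h σ N V i a - rate d K h σ N V k a) 0
  | none, some b => max (rate d K h σ N V k b - rate d K h σ N V i b) 0
  | none, none => 0

/-- The graph (ℓ¹) distance. -/
def graphDist {d : ℕ} (x y : Pt d) : ℝ := ∑ j, |x j - y j|

/-- The generator matrix `Q`. -/
def Qmat (d : ℕ) (K h σ : ℝ) (N : ℕ) (V : Pt d → ℝ) :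
    Matrix {x // x ∈ grid d K h N} {x // x ∈ grid d K h N} ℝ := fun i k =>
  (∑ γ : Move d, if γ.act h i.1 = k.1 then rate d K h σ N V i.1 γ else 0)
    - (if i = k then ∑ γ : Move d, rate d K h σ N V i.1 γ else 0)

/-- The semigroup `S_t = e^{tQ}` acting on functions. -/
def St (d : ℕ) (K h σ : ℝ) (N : ℕ) (V : Pt d → ℝ) (t : ℝ) (f : Pt d → ℝ) (i : Pt d) : ℝ :=
  if hi : i ∈ grid d K h N then
    ∑ k : {x // x ∈ grid d K h N},
      NormedSpace.exp (t • Qmat d K h σ N V) ⟨i, hi⟩ k * f k.1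
  else 0

/-- The transition function `ν ↦ ν p_t` acting on measures. -/
def measPt (d : ℕ) (K h σ : ℝ) (N : ℕ) (V : Pt d → ℝ) (t : ℝ) (ν : Pt d → ℝ) (k : Pt d) : ℝ :=
  if hk : k ∈ grid d K h N then
    ∑ i : {x // x ∈ grid d K h N},
      ν i.1 * NormedSpace.exp (t • Qmat d K h σ N V) i ⟨k, hk⟩
  else 0

/-- `ν` is a probability measure on the grid. -/
def IsProbOn (d : ℕ) (K h : ℝ) (N : ℕ) (ν : Pt d → ℝ) : Prop :=
  (∀ x ∈ grid d K h N, 0 ≤ ν x) ∧ ∑ x ∈ grid d K h N, ν x = 1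

/-- Optimal transport cost between `ν` and `η` for the cost function `D`. -/
def Wgen (d : ℕ) (K h : ℝ) (N : ℕ) (D : Pt d → Pt d → ℝ) (ν η : Pt d → ℝ) : ℝ :=
  sInf { r : ℝ | ∃ γc : Pt d → Pt d → ℝ,
    (∀ x ∈ grid d K h N, ∀ y ∈ grid d K h N, 0 ≤ γc x y) ∧
    (∀ x ∈ grid d K h N, ∑ y ∈ grid d K h N, γc x y = ν x) ∧
    (∀ y ∈ grid d K h N, ∑ x ∈ grid d K h N, γc x y = η y) ∧
    r = ∑ x ∈ grid d K h N, ∑ y ∈ grid d K h N, D x y * γc x y }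

/-- The `L^p` Wasserstein distance w.r.t. the Euclidean distance. -/
def Wp (d : ℕ) (K h : ℝ) (N : ℕ) (p : ℝ) (ν η : Pt d → ℝ) : ℝ :=
  (Wgen d K h N (fun x y => ‖x - y‖ ^ p) ν η) ^ (1 / p)

/-- The `L¹` Wasserstein distance w.r.t. the Euclidean distance. -/
def W1 (d : ℕ) (K h : ℝ) (N : ℕ) (ν η : Pt d → ℝ) : ℝ :=
  Wgen d K h N (fun x y => ‖x - y‖) ν η

/-- The `L¹` Wasserstein distance w.r.t. the graph distance. -/
def Wd1 (d : ℕ) (K h : ℝ) (N : ℕ) (ν η : Pt d → ℝ) : ℝ :=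
  Wgen d K h N graphDist ν η

/-- The rescaling factor `𝒯 = 2 max_i Σ_γ c(i,γ)`. -/
def Tcal (d : ℕ) (K h σ : ℝ) (N : ℕ) (V : Pt d → ℝ) : ℝ :=
  2 * sSup ((fun i => ∑ γ : Move d, rate d K h σ N V i γ) '' (grid d K h N : Set (Pt d)))

/-- The time step `τ = 1/𝒯`. -/
def tauStep (d : ℕ) (K h σ : ℝ) (N : ℕ) (V : Pt d → ℝ) : ℝ :=
  1 / Tcal d K h σ N V

/-- The rescaled jump rates `p(i,γ) = c(i,γ)/𝒯`. -/
def prate (d : ℕ) (K h σ : ℝ) (N : ℕ) (V : Pt d → ℝ) (i : Pt d) (γ : Move d) : ℝ :=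
  rate d K h σ N V i γ / Tcal d K h σ N V

/-- The transition matrix `π` acting on functions: `(π f)(i) = Σ_k π(i,k) f(k)`. -/
def piStep (d : ℕ) (K h σ : ℝ) (N : ℕ) (V : Pt d → ℝ) (f : Pt d → ℝ) (i : Pt d) : ℝ :=
  f i + ∑ γ : Move d, prate d K h σ N V i γ * (f (γ.act h i) - f i)

/-- The entries `π(i,k)` of the transition matrix. -/
def piKernel (d : ℕ) (K h σ : ℝ) (N : ℕ) (V : Pt d → ℝ) (i k : Pt d) : ℝ :=
  (∑ γ : Move d, if γ.act h i = k then prate d K h σ N V i γ else 0)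
    + (if i = k then 1 - ∑ γ : Move d, prate d K h σ N V i γ else 0)

/-- The transition matrix `π` acting on measures: `(ν π)(k) = Σ_i ν(i) π(i,k)`. -/
def piMeas (d : ℕ) (K h σ : ℝ) (N : ℕ) (V : Pt d → ℝ) (ν : Pt d → ℝ) (k : Pt d) : ℝ :=
  if k ∈ grid d K h N then ∑ i ∈ grid d K h N, ν i * piKernel d K h σ N V i k else 0

/-- The Fisher information `F(f)`. -/
def fisher (d : ℕ) (K h σ : ℝ) (N : ℕ) (V : Pt d → ℝ) (φ : ℝ → ℝ) (f : Pt d → ℝ) : ℝ :=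
  (1 / 2) * ∑ i ∈ grid d K h N, ∑ γ : Move d,
    prate d K h σ N V i γ * (deriv φ (f (γ.act h i)) - deriv φ (f i))
      * (f (γ.act h i) - f i) * mh d K h σ N V i

/-- The entropy densities `φ_α` (with `φ₁(x) = x log x - x + 1`). -/
def phiAlpha (α : ℝ) (x : ℝ) : ℝ :=
  if α = 1 then x * Real.log x - x + 1 else (α - 1)⁻¹ * (x ^ α - x) - x + 1

/-- Assumption (A2): strong `κ`-convexity of `V` on `[-K,K]^d`. -/
def A2 (d : ℕ) (K : ℝ) (V : Pt d → ℝ) (κ : ℝ) : Prop :=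
  ∀ x y : Pt d, (∀ j, |x j| ≤ K) → (∀ j, |y j| ≤ K) →
    κ * ‖x - y‖ ^ 2 ≤ ⟪x - y, gradient V x - gradient V y⟫

/-- `V` is additive with components `Vs j`. -/
def IsAdditive (d : ℕ) (V : Pt d → ℝ) (Vs : Fin d → ℝ → ℝ) : Prop :=
  ∀ x : Pt d, V x = ∑ j, Vs j (x j)

/-- `∇V` is Lipschitz continuous with constant `L` on `[-K,K]^d`. -/
def GradLip (d : ℕ) (K : ℝ) (V : Pt d → ℝ) (L : ℝ) : Prop :=
  ∀ x y : Pt d, (∀ j, |x j| ≤ K) → (∀ j, |y j| ≤ K) →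
    ‖gradient V x - gradient V y‖ ≤ L * ‖x - y‖

/-- The basic assumptions on the discretization parameters. -/
def Params (d : ℕ) (K h σ : ℝ) (N : ℕ) (V : Pt d → ℝ) : Prop :=
  1 ≤ d ∧ 0 < K ∧ 0 < h ∧ (N : ℝ) * h = 2 * K ∧ 0 < σ ∧ ContDiff ℝ 2 V

/-- The discrete-time coupling `𝐩` for the neighboring pair `(i, i+heⱼ)`. -/
def pcoup (d : ℕ) (K h σ : ℝ) (N : ℕ) (V : Pt d → ℝ) (i : Pt d) (j : Fin d)
    (q : Option (Move d) × Option (Move d)) : ℝ :=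
  if q = (none, none) then
    1 - ∑ q' ∈ Finset.univ.filter
          (fun q' : Option (Move d) × Option (Move d) => q' ≠ (none, none)),
        crate d K h σ N V i j q'.1 q'.2 / Tcal d K h σ N V
  else crate d K h σ N V i j q.1 q.2 / Tcal d K h σ N V

end
noncomputable section
namespace WC
open Finset

variable {d : ℕ} {K h σ : ℝ} {N : ℕ} {V : Pt d → ℝ}

lemma graphDist_nonneg (x y : Pt d) : 0 ≤ graphDist x y :=
  Finset.sum_nonneg fun _ _ => abs_nonneg _

lemma graphDist_self (x : Pt d) : graphDist x x = 0 := by simp [graphDist]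

lemma graphDist_comm (x y : Pt d) : graphDist x y = graphDist y x := by
  unfold graphDist; exact Finset.sum_congr rfl fun k _ => abs_sub_comm _ _

lemma graphDist_triangle (x y z : Pt d) :
    graphDist x z ≤ graphDist x y + graphDist y z := by
  unfold graphDist
  rw [← Finset.sum_add_distrib]
  exact Finset.sum_le_sum fun k _ => abs_sub_le _ _ _

lemma eq_of_graphDist_eq_zero {x y : Pt d} (h0 : graphDist x y = 0) : x = y := by
  have hz := (Finset.sum_eq_zero_iff_of_nonneg (fun k _ => abs_nonneg _)).1 h0
  exact PiLp.ext fun k => sub_eq_zero.1 (abs_eq_zero.1 (hz k (Finset.mem_univ k)))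

lemma add_single_apply (x : Pt d) (j k : Fin d) (a : ℝ) :
    (x + EuclideanSpace.single j a) k = x k + if k = j then a else 0 := by
  have : (x + EuclideanSpace.single j a) k = x k + EuclideanSpace.single j a k := rfl
  rw [this, EuclideanSpace.single_apply]

lemma sub_single_apply (x : Pt d) (j k : Fin d) (a : ℝ) :
    (x - EuclideanSpace.single j a) k = x k - if k = j then a else 0 := by
  have : (x - EuclideanSpace.single j a) k = x k - EuclideanSpace.single j a k := rfl
  rw [this, EuclideanSpace.single_apply]

lemma graphDist_add_single (x : Pt d) (j : Fin d) (a : ℝ) :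
    graphDist x (x + EuclideanSpace.single j a) = |a| := by
  unfold graphDist
  have key : ∀ k, |x k - (x + EuclideanSpace.single j a) k| = if k = j then |a| else 0 := by
    intro k
    rw [add_single_apply]
    by_cases hk : k = j
    · simp [hk, abs_neg]
    · simp [hk]
  simp_rw [key]
  simp

lemma graphDist_sub_single (x : Pt d) (j : Fin d) (a : ℝ) :
    graphDist x (x - EuclideanSpace.single j a) = |a| := by
  unfold graphDist
  have key : ∀ k, |x k - (x - EuclideanSpace.single j a) k| = if k = j then |a| else 0 := by
    intro k
    rw [sub_single_apply]
    by_cases hk : k = j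
    · simp [hk]
    · simp [hk]
  simp_rw [key]
  simp

lemma graphDist_act_self (γ : Move d) (x : Pt d) : graphDist x (γ.act h x) = |h| := by
  cases γ with
  | pos j => exact graphDist_add_single x j h
  | neg j => exact graphDist_sub_single x j h

lemma graphDist_act_act (γ : Move d) (x y : Pt d) :
    graphDist (γ.act h x) (γ.act h y) = graphDist x y := by
  cases γ with
  | pos j =>
      unfold graphDist
      refine Finset.sum_congr rfl fun k _ => ?_
      simp only [Move.act, add_single_apply]
      ring_nf
  | neg j =>
      unfold graphDist
      refine Finset.sum_congr rfl fun k _ => ?_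
      simp only [Move.act, sub_single_apply]
      ring_nf

lemma act_pos_neg (j : Fin d) (x : Pt d) :
    (Move.neg j).act h ((Move.pos j).act h x) = x := by
  show x + EuclideanSpace.single j h - EuclideanSpace.single j h = x
  exact add_sub_cancel_right x _

lemma mem_grid_iff {x : Pt d} :
    x ∈ grid d K h N ↔ ∀ j, ∃ n : Fin N, x j = -K + h * ((n : ℕ) + 1) - h / 2 := by
  constructor
  · intro hx
    rw [grid, Finset.mem_image] at hx
    obtain ⟨n, -, rfl⟩ := hx
    intro j; exact ⟨n j, rfl⟩
  · intro hx
    rw [grid, Finset.mem_image]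
    exact ⟨fun j => (hx j).choose, Finset.mem_univ _,
      PiLp.ext fun j => ((hx j).choose_spec).symm⟩

lemma grid_step (hh : 0 < h) {x y : Pt d} (hx : x ∈ grid d K h N) (hy : y ∈ grid d K h N)
    {j : Fin d} (hlt : x j < y j) :
    x + EuclideanSpace.single j h ∈ grid d K h N ∧ h ≤ y j - x j := by
  obtain ⟨n, hn⟩ := mem_grid_iff.1 hx j
  obtain ⟨m, hm⟩ := mem_grid_iff.1 hy j
  have hnm : (n : ℕ) < (m : ℕ) := by
    by_contra hc
    push_neg at hc
    have : ((m : ℕ) : ℝ) ≤ ((n : ℕ) : ℝ) := by exact_mod_cast hc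
    rw [hn, hm] at hlt; nlinarith
  constructor
  · rw [mem_grid_iff]
    intro k
    by_cases hk : k = j
    · subst hk
      refine ⟨⟨(n : ℕ) + 1, by omega⟩, ?_⟩
      rw [add_single_apply, if_pos rfl, hn]
      push_cast
      ring
    · obtain ⟨p, hp⟩ := mem_grid_iff.1 hx k
      refine ⟨p, ?_⟩
      rw [add_single_apply, if_neg hk, add_zero, hp]
  · have : ((n : ℕ) : ℝ) + 1 ≤ ((m : ℕ) : ℝ) := by exact_mod_cast hnm
    rw [hn, hm]; nlinarith

lemma graphDist_step (hh : 0 < h) {x y : Pt d} {j : Fin d} (hle : h ≤ y j - x j) :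
    graphDist (x + EuclideanSpace.single j h) y = graphDist x y - h := by
  unfold graphDist
  have key : ∀ k, |(x + EuclideanSpace.single j h) k - y k|
      = |x k - y k| - (if k = j then h else 0) := by
    intro k
    rw [add_single_apply]
    by_cases hk : k = j
    · subst hk
      rw [if_pos rfl]
      have e1 : |x k - y k| = y k - x k := by
        rw [abs_sub_comm]; exact abs_of_nonneg (by linarith)
      have e2 : |x k + h - y k| = y k - x k - h := by
        rw [abs_sub_comm, abs_of_nonneg (by linarith)]; ring
      rw [e1, e2]
    · rw [if_neg hk]
      simp
  simp_rw [key]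
  rw [Finset.sum_sub_distrib]
  simp

lemma rate_nonneg (x : Pt d) (γ : Move d) : 0 ≤ rate d K h σ N V x γ := by
  unfold rate
  split
  · positivity
  · exact le_refl 0

lemma mem_of_rate_ne_zero {x : Pt d} {γ : Move d} (hne : rate d K h σ N V x γ ≠ 0) :
    x ∈ grid d K h N ∧ γ.act h x ∈ grid d K h N := by
  by_contra hc
  exact hne (by unfold rate; rw [if_neg hc])

lemma rate_pos (hσ : 0 < σ) (hh : 0 < h) {x : Pt d} {γ : Move d}
    (hx : x ∈ grid d K h N) (hax : γ.act h x ∈ grid d K h N) :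
    0 < rate d K h σ N V x γ := by
  unfold rate
  rw [if_pos ⟨hx, hax⟩]
  positivity

lemma sum_rate_le_half {x : Pt d} (hx : x ∈ grid d K h N) :
    ∑ γ : Move d, rate d K h σ N V x γ ≤ Tcal d K h σ N V / 2 := by
  have hb : BddAbove ((fun i => ∑ γ : Move d, rate d K h σ N V i γ) ''
      ((grid d K h N : Finset (Pt d)) : Set (Pt d))) :=
    (((grid d K h N).finite_toSet).image _).bddAbove
  have hmem : (∑ γ : Move d, rate d K h σ N V x γ) ∈
      ((fun i => ∑ γ : Move d, rate d K h σ N V i γ) ''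
        ((grid d K h N : Finset (Pt d)) : Set (Pt d))) := ⟨x, by simpa using hx, rfl⟩
  have := le_csSup hb hmem
  unfold Tcal
  linarith

lemma Tcal_nonneg (hg : ∃ x, x ∈ grid d K h N) : 0 ≤ Tcal d K h σ N V := by
  obtain ⟨x, hx⟩ := hg
  have h1 : (0:ℝ) ≤ ∑ γ : Move d, rate d K h σ N V x γ :=
    Finset.sum_nonneg fun γ _ => rate_nonneg x γ
  have h2 := sum_rate_le_half (σ := σ) (V := V) hx
  linarith

lemma N_pos (hK : 0 < K) (hh : 0 < h) (hNh : (N : ℝ) * h = 2 * K) : 0 < N := by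
  by_contra hN
  have : N = 0 := by omega
  rw [this] at hNh
  norm_num at hNh
  nlinarith

lemma grid_nonempty (hN : 0 < N) : ∃ x, x ∈ grid d K h N :=
  ⟨_, Finset.mem_image_of_mem _ (Finset.mem_univ (fun _ : Fin d => (⟨0, hN⟩ : Fin N)))⟩

lemma exists_neighbor (hd : 0 < d) (hN : 2 ≤ N) :
    ∃ i ∈ grid d K h N, ∃ j : Fin d, (Move.pos j).act h i ∈ grid d K h N := by
  have h0N : 0 < N := by omega
  set x₀ : Pt d := (EuclideanSpace.equiv (Fin d) ℝ).symm
    (fun _ => -K + h * (((0 : ℕ) : ℝ) + 1) - h / 2) with hx₀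
  have hx : x₀ ∈ grid d K h N := mem_grid_iff.2 fun j => ⟨⟨0, h0N⟩, rfl⟩
  refine ⟨x₀, hx, ⟨0, hd⟩, mem_grid_iff.2 ?_⟩
  intro k
  by_cases hk : k = ⟨0, hd⟩
  · refine ⟨⟨1, by omega⟩, ?_⟩
    show (x₀ + EuclideanSpace.single (⟨0, hd⟩ : Fin d) h) k = _
    rw [add_single_apply, if_pos hk]
    show -K + h * (((0 : ℕ) : ℝ) + 1) - h / 2 + h = _
    push_cast
    ring
  · refine ⟨⟨0, h0N⟩, ?_⟩
    show (x₀ + EuclideanSpace.single (⟨0, hd⟩ : Fin d) h) k = _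
    rw [add_single_apply, if_neg hk, add_zero]
    rfl

lemma Tcal_pos (hσ : 0 < σ) (hh : 0 < h) (hd : 0 < d) (hN : 2 ≤ N) :
    0 < Tcal d K h σ N V := by
  obtain ⟨i, hi, j, hij⟩ := exists_neighbor (K := K) (h := h) (N := N) hd hN
  have h1 : 0 < rate d K h σ N V i (Move.pos j) := rate_pos hσ hh hi hij
  have h2 : rate d K h σ N V i (Move.pos j) ≤ ∑ γ : Move d, rate d K h σ N V i γ :=
    Finset.single_le_sum (fun γ _ => rate_nonneg i γ) (Finset.mem_univ _)
  have h3 := sum_rate_le_half (σ := σ) (V := V) hi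
  linarith

end WC
namespace WC
open Finset

variable {d : ℕ} {K h σ : ℝ} {N : ℕ} {V : Pt d → ℝ}

lemma min_add_max_sub (x y : ℝ) : min x y + max (x - y) 0 = x := by
  rcases le_total x y with hxy | hxy
  · rw [min_eq_left hxy, max_eq_right (by linarith), add_zero]
  · rw [min_eq_right hxy, max_eq_left (by linarith)]; ring

lemma min_add_max_sub' (x y : ℝ) : min x y + max (y - x) 0 = y := by
  rw [min_comm]; exact min_add_max_sub y x

lemma dir_eq_iff {b : Move d} {j : Fin d} :
    b.dir = j ↔ b = Move.pos j ∨ b = Move.neg j := by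
  cases b <;> simp [Move.dir]

lemma pos_ne_of_dir {a : Move d} {j : Fin d} (hdir : a.dir ≠ j) : a ≠ Move.pos j :=
  fun e => hdir (by rw [e]; rfl)

lemma neg_ne_of_dir {a : Move d} {j : Fin d} (hdir : a.dir ≠ j) : a ≠ Move.neg j :=
  fun e => hdir (by rw [e]; rfl)

lemma filter_dir_eq (j : Fin d) :
    univ.filter (fun b : Move d => b.dir = j) = {Move.pos j, Move.neg j} := by
  ext b
  cases b <;> simp only [Finset.mem_filter, Finset.mem_univ, true_and, Finset.mem_insert, Finset.mem_singleton] <;> simp [Move.dir]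

lemma sum_move_eq (j : Fin d) (g : Move d → ℝ) :
    ∑ b : Move d, g b
      = g (Move.pos j) + g (Move.neg j)
        + ∑ b ∈ univ.filter (fun b : Move d => b.dir ≠ j), g b := by
  have hsplit := Finset.sum_filter_add_sum_filter_not univ (fun b : Move d => b.dir = j) g
  rw [filter_dir_eq] at hsplit
  rw [← hsplit, Finset.sum_insert (by simp), Finset.sum_singleton]

section Pair

variable {i : Pt d} {j : Fin d}

lemma kplus_pos (hA3 : A3 d K h σ N V) (hi : i ∈ grid d K h N)
    (hi' : (Move.pos j).act h i ∈ grid d K h N) : 0 < kplus d K h σ N V i j := hA3.1 j i hi hi'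

lemma kminus_i'_pos (hA3 : A3 d K h σ N V) (hi : i ∈ grid d K h N)
    (hi' : (Move.pos j).act h i ∈ grid d K h N) : 0 < kminus d K h σ N V ((Move.pos j).act h i) j :=
  hA3.2 j _ hi' (by rw [act_pos_neg]; exact hi)

lemma maxsum_nonneg (z w : Pt d) :
    0 ≤ ∑ γ ∈ univ.filter (fun γ : Move d => γ.dir ≠ j),
      max (rate d K h σ N V z γ - rate d K h σ N V w γ) 0 :=
  Finset.sum_nonneg fun γ _ => le_max_right _ 0

lemma F1 (hA3 : A3 d K h σ N V) (hi : i ∈ grid d K h N)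
    (hi' : (Move.pos j).act h i ∈ grid d K h N) : rate d K h σ N V ((Move.pos j).act h i) (Move.pos j)
    ≤ rate d K h σ N V i (Move.pos j) := by
  have hk := kplus_pos hA3 hi hi'
  have hs := maxsum_nonneg (K := K) (h := h) (σ := σ) (N := N) (V := V) (j := j) ((Move.pos j).act h i) i
  unfold kplus at hk
  linarith

lemma F2 (hA3 : A3 d K h σ N V) (hi : i ∈ grid d K h N)
    (hi' : (Move.pos j).act h i ∈ grid d K h N) : rate d K h σ N V i (Move.neg j)
    ≤ rate d K h σ N V ((Move.pos j).act h i) (Move.neg j) := by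
  have hk := kminus_i'_pos hA3 hi hi'
  unfold kminus at hk
  rw [act_pos_neg] at hk
  have hs := maxsum_nonneg (K := K) (h := h) (σ := σ) (N := N) (V := V) (j := j) i ((Move.pos j).act h i)
  linarith

lemma kplus_le : kplus d K h σ N V i j ≤ rate d K h σ N V i (Move.pos j) := by
  have hs := maxsum_nonneg (K := K) (h := h) (σ := σ) (N := N) (V := V) (j := j) ((Move.pos j).act h i) i
  have hr := rate_nonneg (K := K) (h := h) (σ := σ) (N := N) (V := V) ((Move.pos j).act h i) (Move.pos j)
  unfold kplus
  linarith

lemma kminus_i'_le : kminus d K h σ N V ((Move.pos j).act h i) j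
    ≤ rate d K h σ N V ((Move.pos j).act h i) (Move.neg j) := by
  have hs := maxsum_nonneg (K := K) (h := h) (σ := σ) (N := N) (V := V) (j := j)
    ((Move.neg j).act h ((Move.pos j).act h i)) ((Move.pos j).act h i)
  have hr := rate_nonneg (K := K) (h := h) (σ := σ) (N := N) (V := V)
    ((Move.neg j).act h ((Move.pos j).act h i)) (Move.neg j)
  unfold kminus
  linarith

lemma crate_row (hA3 : A3 d K h σ N V) (hi : i ∈ grid d K h N)
    (hi' : (Move.pos j).act h i ∈ grid d K h N) (a : Move d) :
    ∑ b : Option (Move d), crate d K h σ N V i j (some a) b = rate d K h σ N V i a := by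
  have hF1 := F1 hA3 hi hi'
  have hF2 := F2 hA3 hi hi'
  rw [Fintype.sum_option, sum_move_eq j]
  rcases eq_or_ne a.dir j with hdir | hdir
  · rcases dir_eq_iff.1 hdir with rfl | rfl
    · -- a = pos j
      have t0 : crate d K h σ N V i j (some (Move.pos j)) none
          = kplus d K h σ N V i j := by simp [crate]
      have t1 : crate d K h σ N V i j (some (Move.pos j)) (some (Move.pos j))
          = min (rate d K h σ N V i (Move.pos j))
              (rate d K h σ N V ((Move.pos j).act h i) (Move.pos j)) := by
        simp [crate]
      have t2 : crate d K h σ N V i j (some (Move.pos j)) (some (Move.neg j)) = 0 := by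
        simp [crate, Move.dir]
      have t3 : ∀ b ∈ univ.filter (fun b : Move d => b.dir ≠ j),
          crate d K h σ N V i j (some (Move.pos j)) (some b)
            = max (rate d K h σ N V ((Move.pos j).act h i) b - rate d K h σ N V i b) 0 := by
        intro b hb
        rw [Finset.mem_filter] at hb
        have hne : Move.pos j ≠ b := fun e => hb.2 (by rw [← e]; rfl)
        simp [crate, hne, hb.2]
      rw [t0, t1, t2, Finset.sum_congr rfl t3, min_eq_right hF1]
      unfold kplus
      ring
    · -- a = neg j
      have t0 : crate d K h σ N V i j (some (Move.neg j)) none = 0 := by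
        simp [crate]
      have t1 : crate d K h σ N V i j (some (Move.neg j)) (some (Move.pos j)) = 0 := by
        simp [crate, Move.dir]
      have t2 : crate d K h σ N V i j (some (Move.neg j)) (some (Move.neg j))
          = min (rate d K h σ N V i (Move.neg j))
              (rate d K h σ N V ((Move.pos j).act h i) (Move.neg j)) := by
        simp [crate]
      have t3 : ∀ b ∈ univ.filter (fun b : Move d => b.dir ≠ j),
          crate d K h σ N V i j (some (Move.neg j)) (some b) = 0 := by
        intro b hb
        rw [Finset.mem_filter] at hb
        have hne : Move.neg j ≠ b := fun e => hb.2 (by rw [← e]; rfl)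
        have hnb : b ≠ Move.neg j := fun e => hb.2 (by rw [e]; rfl)
        simp [crate, hne, hnb, Move.dir]
      rw [t0, t1, t2, Finset.sum_eq_zero t3, min_eq_left hF2]
      ring
  · -- a.dir ≠ j
    have hpj : a ≠ Move.pos j := pos_ne_of_dir hdir
    have hnj : a ≠ Move.neg j := neg_ne_of_dir hdir
    have t0 : crate d K h σ N V i j (some a) none = 0 := by simp [crate, hpj]
    have t1 : crate d K h σ N V i j (some a) (some (Move.pos j)) = 0 := by
      have : a ≠ Move.pos j := hpj
      simp [crate, this, hpj, Move.dir]
    have t2 : crate d K h σ N V i j (some a) (some (Move.neg j))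
        = max (rate d K h σ N V i a - rate d K h σ N V ((Move.pos j).act h i) a) 0 := by
      simp [crate, hnj, hpj, hdir]
    have t3 : ∑ b ∈ univ.filter (fun b : Move d => b.dir ≠ j),
        crate d K h σ N V i j (some a) (some b)
          = min (rate d K h σ N V i a) (rate d K h σ N V ((Move.pos j).act h i) a) := by
      refine Finset.sum_eq_single_of_mem a (by simp [hdir]) ?_ |>.trans ?_
      · intro b hb hba
        rw [Finset.mem_filter] at hb
        have h1 : a ≠ b := fun e => hba e.symm
        have h2 : b ≠ Move.neg j := neg_ne_of_dir hb.2
        simp [crate, h1, hpj, h2]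
      · simp [crate]
    rw [t0, t1, t2, t3]
    have := min_add_max_sub (rate d K h σ N V i a)
      (rate d K h σ N V ((Move.pos j).act h i) a)
    linarith

lemma crate_col (hA3 : A3 d K h σ N V) (hi : i ∈ grid d K h N)
    (hi' : (Move.pos j).act h i ∈ grid d K h N) (b : Move d) :
    crate d K h σ N V i j none (some b)
      + ∑ a : Move d, crate d K h σ N V i j (some a) (some b)
      = rate d K h σ N V ((Move.pos j).act h i) b := by
  have hF1 := F1 hA3 hi hi'
  have hF2 := F2 hA3 hi hi'
  rw [sum_move_eq j]
  rcases eq_or_ne b.dir j with hdir | hdir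
  · rcases dir_eq_iff.1 hdir with rfl | rfl
    · -- b = pos j
      have t0 : crate d K h σ N V i j none (some (Move.pos j)) = 0 := by
        simp [crate]
      have t1 : crate d K h σ N V i j (some (Move.pos j)) (some (Move.pos j))
          = min (rate d K h σ N V i (Move.pos j))
              (rate d K h σ N V ((Move.pos j).act h i) (Move.pos j)) := by
        simp [crate]
      have t2 : crate d K h σ N V i j (some (Move.neg j)) (some (Move.pos j)) = 0 := by
        simp [crate, Move.dir]
      have t3 : ∀ a ∈ univ.filter (fun a : Move d => a.dir ≠ j),
          crate d K h σ N V i j (some a) (some (Move.pos j)) = 0 := by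
        intro a ha
        rw [Finset.mem_filter] at ha
        have h1 : a ≠ Move.pos j := pos_ne_of_dir ha.2
        simp [crate, h1, Move.dir]
      rw [t0, t1, t2, Finset.sum_eq_zero t3, min_eq_right hF1]
      ring
    · -- b = neg j
      have t0 : crate d K h σ N V i j none (some (Move.neg j))
          = kminus d K h σ N V ((Move.pos j).act h i) j := by
        simp [crate]
      have t1 : crate d K h σ N V i j (some (Move.pos j)) (some (Move.neg j)) = 0 := by
        simp [crate, Move.dir]
      have t2 : crate d K h σ N V i j (some (Move.neg j)) (some (Move.neg j))
          = min (rate d K h σ N V i (Move.neg j))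
              (rate d K h σ N V ((Move.pos j).act h i) (Move.neg j)) := by
        simp [crate]
      have t3 : ∀ a ∈ univ.filter (fun a : Move d => a.dir ≠ j),
          crate d K h σ N V i j (some a) (some (Move.neg j))
            = max (rate d K h σ N V i a - rate d K h σ N V ((Move.pos j).act h i) a) 0 := by
        intro a ha
        rw [Finset.mem_filter] at ha
        have h1 : a ≠ Move.neg j := neg_ne_of_dir ha.2
        have h2 : a ≠ Move.pos j := pos_ne_of_dir ha.2
        simp [crate, h1, h2, ha.2]
      rw [t0, t1, t2, Finset.sum_congr rfl t3, min_eq_left hF2]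
      unfold kminus
      rw [act_pos_neg]
      ring
  · -- b.dir ≠ j
    have hpj : b ≠ Move.pos j := pos_ne_of_dir hdir
    have hnj : b ≠ Move.neg j := neg_ne_of_dir hdir
    have t0 : crate d K h σ N V i j none (some b) = 0 := by simp [crate, hnj]
    have t1 : crate d K h σ N V i j (some (Move.pos j)) (some b)
        = max (rate d K h σ N V ((Move.pos j).act h i) b - rate d K h σ N V i b) 0 := by
      have h1 : Move.pos j ≠ b := fun e => hpj e.symm
      simp [crate, h1, hdir]
    have t2 : crate d K h σ N V i j (some (Move.neg j)) (some b) = 0 := by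
      have h1 : Move.neg j ≠ b := fun e => hnj e.symm
      simp [crate, h1, hdir, Move.dir]
    have t3 : ∑ a ∈ univ.filter (fun a : Move d => a.dir ≠ j),
        crate d K h σ N V i j (some a) (some b)
          = min (rate d K h σ N V i b) (rate d K h σ N V ((Move.pos j).act h i) b) := by
      refine Finset.sum_eq_single_of_mem b (by simp [hdir]) ?_ |>.trans ?_
      · intro a ha hab
        rw [Finset.mem_filter] at ha
        have h1 : a ≠ Move.pos j := pos_ne_of_dir ha.2
        simp [crate, hab, h1, hnj]
      · simp [crate]
    rw [t0, t1, t2, t3]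
    have := min_add_max_sub' (rate d K h σ N V i b)
      (rate d K h σ N V ((Move.pos j).act h i) b)
    linarith

lemma crate_none_row :
    ∑ b : Move d, crate d K h σ N V i j none (some b)
      = kminus d K h σ N V ((Move.pos j).act h i) j := by
  have : ∀ b : Move d, crate d K h σ N V i j none (some b)
      = if b = Move.neg j then kminus d K h σ N V ((Move.pos j).act h i) j else 0 := by
    intro b; simp [crate]
  simp_rw [this]
  rw [Finset.sum_ite_eq' univ (Move.neg j)]
  simp

lemma crate_pos_none :
    ∑ a : Move d, crate d K h σ N V i j (some a) none = kplus d K h σ N V i j := by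
  have : ∀ a : Move d, crate d K h σ N V i j (some a) none
      = if a = Move.pos j then kplus d K h σ N V i j else 0 := by
    intro a; simp [crate]
  simp_rw [this]
  rw [Finset.sum_ite_eq' univ (Move.pos j)]
  simp

lemma sum_crate_ne_nn (hA3 : A3 d K h σ N V) (hi : i ∈ grid d K h N)
    (hi' : (Move.pos j).act h i ∈ grid d K h N) :
    ∑ q ∈ univ.filter (fun q : Option (Move d) × Option (Move d) => q ≠ (none, none)),
      crate d K h σ N V i j q.1 q.2
    = (∑ a : Move d, rate d K h σ N V i a)
      + kminus d K h σ N V ((Move.pos j).act h i) j := by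
  have hfull : ∑ q : Option (Move d) × Option (Move d), crate d K h σ N V i j q.1 q.2
      = (∑ a : Move d, rate d K h σ N V i a)
        + kminus d K h σ N V ((Move.pos j).act h i) j := by
    rw [Fintype.sum_prod_type, Fintype.sum_option]
    have e1 : ∑ q2 : Option (Move d), crate d K h σ N V i j none q2
        = kminus d K h σ N V ((Move.pos j).act h i) j := by
      rw [Fintype.sum_option]
      have : crate d K h σ N V i j none none = 0 := by simp [crate]
      rw [this, crate_none_row, zero_add]
    have e2 : ∀ a : Move d, ∑ q2 : Option (Move d), crate d K h σ N V i j (some a) q2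
        = rate d K h σ N V i a := fun a => crate_row hA3 hi hi' a
    rw [e1]
    rw [Finset.sum_congr rfl (fun a _ => e2 a)]
    ring
  rw [Finset.filter_ne', Finset.sum_erase _ (by simp [crate])]
  exact hfull

end Pair

end WC
namespace WC
open Finset

variable {d : ℕ} {K h σ : ℝ} {N : ℕ} {V : Pt d → ℝ}

def IsCpl (d : ℕ) (K h : ℝ) (N : ℕ) (μ ρ : Pt d → ℝ) (Γ : Pt d → Pt d → ℝ) : Prop :=
  (∀ x ∈ grid d K h N, ∀ y ∈ grid d K h N, 0 ≤ Γ x y) ∧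
  (∀ x ∈ grid d K h N, ∑ y ∈ grid d K h N, Γ x y = μ x) ∧
  (∀ y ∈ grid d K h N, ∑ x ∈ grid d K h N, Γ x y = ρ y)

def cost (d : ℕ) (K h : ℝ) (N : ℕ) (D : Pt d → Pt d → ℝ) (Γ : Pt d → Pt d → ℝ) : ℝ :=
  ∑ x ∈ grid d K h N, ∑ y ∈ grid d K h N, D x y * Γ x y

lemma Wgen_bddBelow {D : Pt d → Pt d → ℝ}
    (hD : ∀ x ∈ grid d K h N, ∀ y ∈ grid d K h N, 0 ≤ D x y) (μ ρ : Pt d → ℝ) :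
    BddBelow { r : ℝ | ∃ γc : Pt d → Pt d → ℝ,
      (∀ x ∈ grid d K h N, ∀ y ∈ grid d K h N, 0 ≤ γc x y) ∧
      (∀ x ∈ grid d K h N, ∑ y ∈ grid d K h N, γc x y = μ x) ∧
      (∀ y ∈ grid d K h N, ∑ x ∈ grid d K h N, γc x y = ρ y) ∧
      r = ∑ x ∈ grid d K h N, ∑ y ∈ grid d K h N, D x y * γc x y } := by
  refine ⟨0, ?_⟩
  rintro r ⟨γc, h1, -, -, rfl⟩
  exact Finset.sum_nonneg fun x hx => Finset.sum_nonneg fun y hy =>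
    mul_nonneg (hD x hx y hy) (h1 x hx y hy)

lemma Wgen_le_cost {D : Pt d → Pt d → ℝ}
    (hD : ∀ x ∈ grid d K h N, ∀ y ∈ grid d K h N, 0 ≤ D x y) {μ ρ : Pt d → ℝ}
    {Γ : Pt d → Pt d → ℝ} (hΓ : IsCpl d K h N μ ρ Γ) :
    Wgen d K h N D μ ρ ≤ cost d K h N D Γ :=
  csInf_le (Wgen_bddBelow hD μ ρ) ⟨Γ, hΓ.1, hΓ.2.1, hΓ.2.2, rfl⟩

lemma Wgen_nonneg {D : Pt d → Pt d → ℝ}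
    (hD : ∀ x ∈ grid d K h N, ∀ y ∈ grid d K h N, 0 ≤ D x y) (μ ρ : Pt d → ℝ) :
    0 ≤ Wgen d K h N D μ ρ := by
  apply Real.sInf_nonneg
  rintro r ⟨γc, h1, -, -, rfl⟩
  exact Finset.sum_nonneg fun x hx => Finset.sum_nonneg fun y hy =>
    mul_nonneg (hD x hx y hy) (h1 x hx y hy)

lemma isCpl_prod {ν η : Pt d → ℝ} (hν : IsProbOn d K h N ν) (hη : IsProbOn d K h N η) :
    IsCpl d K h N ν η (fun x y => ν x * η y) := by
  refine ⟨fun x hx y hy => mul_nonneg (hν.1 x hx) (hη.1 y hy), fun x hx => ?_, fun y hy => ?_⟩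
  · rw [← Finset.mul_sum, hη.2, mul_one]
  · rw [← Finset.sum_mul, hν.2, one_mul]

lemma isCpl_diag {μ : Pt d → ℝ} (hμ : ∀ x ∈ grid d K h N, 0 ≤ μ x) :
    IsCpl d K h N μ μ (fun a b => if a = b then μ a else 0) := by
  refine ⟨fun x hx y hy => ?_, fun x hx => ?_, fun y hy => ?_⟩
  · show (0:ℝ) ≤ if x = y then μ x else 0
    split
    · exact hμ x hx
    · exact le_refl 0
  · simp [hx]
  · simp [hy]

lemma cost_diag {D : Pt d → Pt d → ℝ} (hDdiag : ∀ x, D x x = 0) (μ : Pt d → ℝ) :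
    cost d K h N D (fun a b => if a = b then μ a else 0) = 0 := by
  unfold cost
  apply Finset.sum_eq_zero
  intro x hx
  have : ∀ y ∈ grid d K h N, D x y * (if x = y then μ x else 0) = 0 := by
    intro y hy
    by_cases hxy : x = y
    · subst hxy; rw [hDdiag]; ring
    · rw [if_neg hxy, mul_zero]
  exact Finset.sum_eq_zero this

lemma isCpl_transpose {μ ρ : Pt d → ℝ} {Γ : Pt d → Pt d → ℝ}
    (hΓ : IsCpl d K h N μ ρ Γ) : IsCpl d K h N ρ μ (fun a b => Γ b a) :=
  ⟨fun x hx y hy => hΓ.1 y hy x hx, fun x hx => hΓ.2.2 x hx, fun y hy => hΓ.2.1 y hy⟩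

lemma cost_transpose {D : Pt d → Pt d → ℝ} (hsymm : ∀ x y, D x y = D y x)
    (Γ : Pt d → Pt d → ℝ) :
    cost d K h N D (fun a b => Γ b a) = cost d K h N D Γ := by
  unfold cost
  rw [Finset.sum_comm]
  exact Finset.sum_congr rfl fun x _ => Finset.sum_congr rfl fun y _ => by rw [hsymm]

def glue (d : ℕ) (K h : ℝ) (N : ℕ) (ρ : Pt d → ℝ) (Γ₁ Γ₂ : Pt d → Pt d → ℝ)
    (x y : Pt d) : ℝ :=
  ∑ z ∈ grid d K h N, if ρ z = 0 then 0 else Γ₁ x z * Γ₂ z y / ρ z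

section Glue

variable {μ ρ θ : Pt d → ℝ} {Γ₁ Γ₂ : Pt d → Pt d → ℝ}

lemma glue_aux_rho_nonneg (h₁ : IsCpl d K h N μ ρ Γ₁) :
    ∀ z ∈ grid d K h N, 0 ≤ ρ z := fun z hz => by
  rw [← h₁.2.2 z hz]
  exact Finset.sum_nonneg fun x hx => h₁.1 x hx z hz

lemma glue_aux_G1_zero (h₁ : IsCpl d K h N μ ρ Γ₁) :
    ∀ x ∈ grid d K h N, ∀ z ∈ grid d K h N, ρ z = 0 → Γ₁ x z = 0 := by
  intro x hx z hz h0
  have hle : Γ₁ x z ≤ ∑ x' ∈ grid d K h N, Γ₁ x' z :=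
    Finset.single_le_sum (fun x' hx' => h₁.1 x' hx' z hz) hx
  have := h₁.2.2 z hz
  have h1 := h₁.1 x hx z hz
  linarith [hle.trans_eq (this.trans h0)]

lemma glue_aux_G2_zero (h₂ : IsCpl d K h N ρ θ Γ₂) :
    ∀ z ∈ grid d K h N, ∀ y ∈ grid d K h N, ρ z = 0 → Γ₂ z y = 0 := by
  intro z hz y hy h0
  have hle : Γ₂ z y ≤ ∑ y' ∈ grid d K h N, Γ₂ z y' :=
    Finset.single_le_sum (fun y' hy' => h₂.1 z hz y' hy') hy
  have := h₂.2.1 z hz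
  have h1 := h₂.1 z hz y hy
  linarith [hle.trans_eq (this.trans h0)]

lemma glue_row (h₁ : IsCpl d K h N μ ρ Γ₁) (h₂ : IsCpl d K h N ρ θ Γ₂) :
    ∀ x ∈ grid d K h N, ∀ z ∈ grid d K h N,
      (∑ y ∈ grid d K h N, if ρ z = 0 then 0 else Γ₁ x z * Γ₂ z y / ρ z) = Γ₁ x z := by
  intro x hx z hz
  by_cases h0 : ρ z = 0
  · simp only [if_pos h0]
    rw [Finset.sum_const_zero]
    exact (glue_aux_G1_zero h₁ x hx z hz h0).symm
  · simp only [if_neg h0]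
    rw [← Finset.sum_div, ← Finset.mul_sum, h₂.2.1 z hz, mul_div_assoc, div_self h0, mul_one]

lemma glue_col (h₁ : IsCpl d K h N μ ρ Γ₁) (h₂ : IsCpl d K h N ρ θ Γ₂) :
    ∀ y ∈ grid d K h N, ∀ z ∈ grid d K h N,
      (∑ x ∈ grid d K h N, if ρ z = 0 then 0 else Γ₁ x z * Γ₂ z y / ρ z) = Γ₂ z y := by
  intro y hy z hz
  by_cases h0 : ρ z = 0
  · simp only [if_pos h0]
    rw [Finset.sum_const_zero]
    exact (glue_aux_G2_zero h₂ z hz y hy h0).symm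
  · simp only [if_neg h0]
    rw [← Finset.sum_div, ← Finset.sum_mul, h₁.2.2 z hz]
    rw [mul_comm, mul_div_assoc, div_self h0, mul_one]

lemma glue_isCpl (h₁ : IsCpl d K h N μ ρ Γ₁) (h₂ : IsCpl d K h N ρ θ Γ₂) :
    IsCpl d K h N μ θ (glue d K h N ρ Γ₁ Γ₂) := by
  refine ⟨fun x hx y hy => ?_, fun x hx => ?_, fun y hy => ?_⟩
  · refine Finset.sum_nonneg fun z hz => ?_
    by_cases h0 : ρ z = 0
    · simp [h0]
    · rw [if_neg h0]
      exact div_nonneg (mul_nonneg (h₁.1 x hx z hz) (h₂.1 z hz y hy))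
        (glue_aux_rho_nonneg h₁ z hz)
  · unfold glue
    rw [Finset.sum_comm]
    rw [Finset.sum_congr rfl (fun z hz => glue_row h₁ h₂ x hx z hz)]
    exact h₁.2.1 x hx
  · unfold glue
    rw [Finset.sum_comm]
    rw [Finset.sum_congr rfl (fun z hz => glue_col h₁ h₂ y hy z hz)]
    exact h₂.2.2 y hy

lemma glue_cost_le (h₁ : IsCpl d K h N μ ρ Γ₁) (h₂ : IsCpl d K h N ρ θ Γ₂) :
    cost d K h N graphDist (glue d K h N ρ Γ₁ Γ₂)
      ≤ cost d K h N graphDist Γ₁ + cost d K h N graphDist Γ₂ := by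
  have enonneg : ∀ x ∈ grid d K h N, ∀ z ∈ grid d K h N, ∀ y ∈ grid d K h N,
      (0:ℝ) ≤ (if ρ z = 0 then 0 else Γ₁ x z * Γ₂ z y / ρ z) := by
    intro x hx z hz y hy
    by_cases h0 : ρ z = 0
    · simp [h0]
    · rw [if_neg h0]
      exact div_nonneg (mul_nonneg (h₁.1 x hx z hz) (h₂.1 z hz y hy))
        (glue_aux_rho_nonneg h₁ z hz)
  have step1 : cost d K h N graphDist (glue d K h N ρ Γ₁ Γ₂)
      ≤ ∑ x ∈ grid d K h N, ∑ y ∈ grid d K h N, ∑ z ∈ grid d K h N,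
        (graphDist x z + graphDist z y) *
          (if ρ z = 0 then 0 else Γ₁ x z * Γ₂ z y / ρ z) := by
    unfold cost glue
    refine Finset.sum_le_sum fun x hx => Finset.sum_le_sum fun y hy => ?_
    rw [Finset.mul_sum]
    refine Finset.sum_le_sum fun z hz => ?_
    exact mul_le_mul_of_nonneg_right (graphDist_triangle x z y) (enonneg x hx z hz y hy)
  refine step1.trans (le_of_eq ?_)
  have p1 : ∑ x ∈ grid d K h N, ∑ y ∈ grid d K h N, ∑ z ∈ grid d K h N,
      graphDist x z * (if ρ z = 0 then 0 else Γ₁ x z * Γ₂ z y / ρ z)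
      = cost d K h N graphDist Γ₁ := by
    unfold cost
    refine Finset.sum_congr rfl fun x hx => ?_
    rw [Finset.sum_comm]
    refine Finset.sum_congr rfl fun z hz => ?_
    rw [← Finset.mul_sum, glue_row h₁ h₂ x hx z hz]
  have p2 : ∑ x ∈ grid d K h N, ∑ y ∈ grid d K h N, ∑ z ∈ grid d K h N,
      graphDist z y * (if ρ z = 0 then 0 else Γ₁ x z * Γ₂ z y / ρ z)
      = cost d K h N graphDist Γ₂ := by
    unfold cost
    have swap1 : ∑ x ∈ grid d K h N, ∑ y ∈ grid d K h N, ∑ z ∈ grid d K h N,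
        graphDist z y * (if ρ z = 0 then 0 else Γ₁ x z * Γ₂ z y / ρ z)
        = ∑ y ∈ grid d K h N, ∑ x ∈ grid d K h N, ∑ z ∈ grid d K h N,
        graphDist z y * (if ρ z = 0 then 0 else Γ₁ x z * Γ₂ z y / ρ z) :=
      Finset.sum_comm
    rw [swap1]
    have swap2 : ∀ y : Pt d, (∑ x ∈ grid d K h N, ∑ z ∈ grid d K h N,
        graphDist z y * (if ρ z = 0 then 0 else Γ₁ x z * Γ₂ z y / ρ z))
        = ∑ z ∈ grid d K h N, ∑ x ∈ grid d K h N,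
        graphDist z y * (if ρ z = 0 then 0 else Γ₁ x z * Γ₂ z y / ρ z) :=
      fun y => Finset.sum_comm
    rw [Finset.sum_congr rfl fun (y : Pt d) _ => swap2 y]
    have swap3 : ∑ y ∈ grid d K h N, ∑ z ∈ grid d K h N, ∑ x ∈ grid d K h N,
        graphDist z y * (if ρ z = 0 then 0 else Γ₁ x z * Γ₂ z y / ρ z)
        = ∑ z ∈ grid d K h N, ∑ y ∈ grid d K h N, ∑ x ∈ grid d K h N,
        graphDist z y * (if ρ z = 0 then 0 else Γ₁ x z * Γ₂ z y / ρ z) :=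
      Finset.sum_comm
    rw [swap3]
    refine Finset.sum_congr rfl fun z hz => Finset.sum_congr rfl fun y hy => ?_
    rw [← Finset.mul_sum, glue_col h₁ h₂ y hy z hz]
  calc ∑ x ∈ grid d K h N, ∑ y ∈ grid d K h N, ∑ z ∈ grid d K h N,
      (graphDist x z + graphDist z y) * (if ρ z = 0 then 0 else Γ₁ x z * Γ₂ z y / ρ z)
      = (∑ x ∈ grid d K h N, ∑ y ∈ grid d K h N, ∑ z ∈ grid d K h N,
          graphDist x z * (if ρ z = 0 then 0 else Γ₁ x z * Γ₂ z y / ρ z))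
        + ∑ x ∈ grid d K h N, ∑ y ∈ grid d K h N, ∑ z ∈ grid d K h N,
          graphDist z y * (if ρ z = 0 then 0 else Γ₁ x z * Γ₂ z y / ρ z) := by
        rw [← Finset.sum_add_distrib]
        refine Finset.sum_congr rfl fun x hx => ?_
        rw [← Finset.sum_add_distrib]
        refine Finset.sum_congr rfl fun y hy => ?_
        rw [← Finset.sum_add_distrib]
        exact Finset.sum_congr rfl fun z hz => by ring
    _ = cost d K h N graphDist Γ₁ + cost d K h N graphDist Γ₂ := by rw [p1, p2]

end Glue

end WC
namespace WC
open Finset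

variable {d : ℕ} {K h σ : ℝ} {N : ℕ} {V : Pt d → ℝ} {i x : Pt d} {j : Fin d}

lemma prate_nonneg (hg : ∃ x, x ∈ grid d K h N) (x : Pt d) (γ : Move d) :
    0 ≤ prate d K h σ N V x γ :=
  div_nonneg (rate_nonneg x γ) (Tcal_nonneg hg)

lemma sum_prate_le_one (hg : ∃ x, x ∈ grid d K h N) (hx : x ∈ grid d K h N) :
    ∑ γ : Move d, prate d K h σ N V x γ ≤ 1 := by
  unfold prate
  rw [← Finset.sum_div]
  rcases eq_or_lt_of_le (Tcal_nonneg (σ := σ) (V := V) hg) with h0 | h0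
  · rw [← h0, div_zero]; norm_num
  · rw [div_le_one h0]
    have := sum_rate_le_half (σ := σ) (V := V) hx
    linarith

lemma prate_eq_zero_of_not_mem {γ : Move d} (hax : γ.act h x ∉ grid d K h N) :
    prate d K h σ N V x γ = 0 := by
  unfold prate
  by_cases hr : rate d K h σ N V x γ = 0
  · rw [hr, zero_div]
  · exact absurd (mem_of_rate_ne_zero hr).2 hax

lemma piKernel_nonneg (hg : ∃ x, x ∈ grid d K h N) (hx : x ∈ grid d K h N) (k : Pt d) :
    0 ≤ piKernel d K h σ N V x k := by
  unfold piKernel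
  have h1 : (0:ℝ) ≤ ∑ γ : Move d, if γ.act h x = k then prate d K h σ N V x γ else 0 := by
    refine Finset.sum_nonneg fun γ _ => ?_
    split
    · exact prate_nonneg hg x γ
    · exact le_refl 0
  have h2 : (0:ℝ) ≤ if x = k then 1 - ∑ γ : Move d, prate d K h σ N V x γ else 0 := by
    split
    · have := sum_prate_le_one (σ := σ) (V := V) hg hx; linarith
    · exact le_refl 0
  linarith

lemma piKernel_rowsum (hx : x ∈ grid d K h N) :
    ∑ k ∈ grid d K h N, piKernel d K h σ N V x k = 1 := by
  unfold piKernel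
  rw [Finset.sum_add_distrib]
  have e1 : ∑ k ∈ grid d K h N, ∑ γ : Move d,
      (if γ.act h x = k then prate d K h σ N V x γ else 0)
      = ∑ γ : Move d, prate d K h σ N V x γ := by
    rw [Finset.sum_comm]
    refine Finset.sum_congr rfl fun γ _ => ?_
    rw [Finset.sum_ite_eq]
    by_cases hmem : γ.act h x ∈ grid d K h N
    · rw [if_pos hmem]
    · rw [if_neg hmem, prate_eq_zero_of_not_mem hmem]
  have e2 : ∑ k ∈ grid d K h N,
      (if x = k then 1 - ∑ γ : Move d, prate d K h σ N V x γ else 0)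
      = 1 - ∑ γ : Move d, prate d K h σ N V x γ := by
    rw [Finset.sum_ite_eq, if_pos hx]
  rw [e1, e2]
  ring

lemma isProbOn_piMeas (hg : ∃ x, x ∈ grid d K h N) {ν : Pt d → ℝ}
    (hν : IsProbOn d K h N ν) : IsProbOn d K h N (piMeas d K h σ N V ν) := by
  constructor
  · intro k hk
    rw [piMeas, if_pos hk]
    exact Finset.sum_nonneg fun x hx =>
      mul_nonneg (hν.1 x hx) (piKernel_nonneg hg hx k)
  · unfold piMeas
    rw [Finset.sum_congr rfl fun k (hk : k ∈ grid d K h N) => if_pos hk]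
    rw [Finset.sum_comm]
    rw [Finset.sum_congr rfl fun x (hx : x ∈ grid d K h N) => (Finset.mul_sum _ _ _).symm]
    rw [Finset.sum_congr rfl fun x (hx : x ∈ grid d K h N) => by
      rw [piKernel_rowsum (σ := σ) (V := V) hx, mul_one]]
    exact hν.2

section Pair2

lemma crate_nonneg (hA3 : A3 d K h σ N V) (hi : i ∈ grid d K h N) (hi' : (Move.pos j).act h i ∈ grid d K h N)
    (q1 q2 : Option (Move d)) : 0 ≤ crate d K h σ N V i j q1 q2 := by
  rcases q1 with _ | a <;> rcases q2 with _ | b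
  · simp [crate]
  · show (0:ℝ) ≤ if b = Move.neg j then kminus d K h σ N V ((Move.pos j).act h i) j else 0
    split
    · exact (kminus_i'_pos hA3 hi hi').le
    · exact le_refl 0
  · show (0:ℝ) ≤ if a = Move.pos j then kplus d K h σ N V i j else 0
    split
    · exact (kplus_pos hA3 hi hi').le
    · exact le_refl 0
  · show (0:ℝ) ≤ if a = b then _ else if a = Move.pos j ∧ Move.dir b ≠ j then _
      else if Move.dir a ≠ j ∧ b = Move.neg j then _ else 0
    split_ifs
    · exact le_min (rate_nonneg _ _) (rate_nonneg _ _)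
    · exact le_max_right _ 0
    · exact le_max_right _ 0
    · exact le_refl 0

lemma pcoup_ne {q : Option (Move d) × Option (Move d)} (hq : q ≠ (none, none)) :
    pcoup d K h σ N V i j q = crate d K h σ N V i j q.1 q.2 / Tcal d K h σ N V := by
  rw [pcoup, if_neg hq]

lemma pcoup_nn : pcoup d K h σ N V i j (none, none)
    = 1 - ∑ q' ∈ Finset.univ.filter
        (fun q' : Option (Move d) × Option (Move d) => q' ≠ (none, none)),
      crate d K h σ N V i j q'.1 q'.2 / Tcal d K h σ N V := by
  rw [pcoup, if_pos rfl]

lemma sum_crate_le_Tcal (hA3 : A3 d K h σ N V) (hi : i ∈ grid d K h N)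
    (hi' : (Move.pos j).act h i ∈ grid d K h N) :
    ∑ q ∈ univ.filter (fun q : Option (Move d) × Option (Move d) => q ≠ (none, none)),
      crate d K h σ N V i j q.1 q.2 ≤ Tcal d K h σ N V := by
  rw [sum_crate_ne_nn hA3 hi hi']
  have h1 := sum_rate_le_half (σ := σ) (V := V) hi
  have h2 := sum_rate_le_half (σ := σ) (V := V) hi'
  have h3 := kminus_i'_le (d := d) (K := K) (h := h) (σ := σ) (N := N) (V := V) (i := i) (j := j)
  have h4 : rate d K h σ N V ((Move.pos j).act h i) (Move.neg j)
      ≤ ∑ γ : Move d, rate d K h σ N V ((Move.pos j).act h i) γ :=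
    Finset.single_le_sum (fun γ _ => rate_nonneg _ γ) (Finset.mem_univ _)
  linarith

lemma pcoup_nonneg (hA3 : A3 d K h σ N V) (hg : ∃ x, x ∈ grid d K h N) (hi : i ∈ grid d K h N)
    (hi' : (Move.pos j).act h i ∈ grid d K h N)
    (q : Option (Move d) × Option (Move d)) : 0 ≤ pcoup d K h σ N V i j q := by
  by_cases hq : q = (none, none)
  · subst hq
    rw [pcoup_nn]
    rw [← Finset.sum_div]
    have hS := sum_crate_le_Tcal hA3 hi hi'
    rcases eq_or_lt_of_le (Tcal_nonneg (σ := σ) (V := V) hg) with h0 | h0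
    · rw [← h0, div_zero]; norm_num
    · have : (∑ q ∈ univ.filter
          (fun q : Option (Move d) × Option (Move d) => q ≠ (none, none)),
          crate d K h σ N V i j q.1 q.2) / Tcal d K h σ N V ≤ 1 := by
        rw [div_le_one h0]; exact hS
      linarith
  · rw [pcoup_ne hq]
    exact div_nonneg (crate_nonneg hA3 hi hi' q.1 q.2) (Tcal_nonneg hg)

lemma sum_pcoup (hA3 : A3 d K h σ N V) (hi : i ∈ grid d K h N) (hi' : (Move.pos j).act h i ∈ grid d K h N) :
    ∑ q : Option (Move d) × Option (Move d), pcoup d K h σ N V i j q = 1 := by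
  rw [← Finset.sum_filter_add_sum_filter_not univ
    (fun q : Option (Move d) × Option (Move d) => q = (none, none))]
  have e1 : univ.filter (fun q : Option (Move d) × Option (Move d) => q = (none, none))
      = {(none, none)} := by
    rw [Finset.filter_eq', if_pos (Finset.mem_univ _)]
  rw [e1, Finset.sum_singleton, pcoup_nn]
  have e2 : ∑ q ∈ univ.filter
      (fun q : Option (Move d) × Option (Move d) => ¬ q = (none, none)),
      pcoup d K h σ N V i j q
      = ∑ q ∈ univ.filter
        (fun q : Option (Move d) × Option (Move d) => q ≠ (none, none)),
        crate d K h σ N V i j q.1 q.2 / Tcal d K h σ N V := by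
    refine Finset.sum_congr rfl fun q hq => ?_
    rw [Finset.mem_filter] at hq
    exact pcoup_ne hq.2
  rw [e2]
  ring

end Pair2

end WC
namespace WC
open Finset

variable {d : ℕ} {K h σ : ℝ} {N : ℕ} {V : Pt d → ℝ} {i : Pt d} {j : Fin d}

lemma crate_ne_zero_mem (hi : i ∈ grid d K h N)
    (hi' : (Move.pos j).act h i ∈ grid d K h N) {q1 q2 : Option (Move d)}
    (hc : crate d K h σ N V i j q1 q2 ≠ 0) :
    actO h q1 i ∈ grid d K h N ∧ actO h q2 ((Move.pos j).act h i) ∈ grid d K h N := by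
  rcases q1 with _ | a <;> rcases q2 with _ | b
  · exact ⟨hi, hi'⟩
  · by_cases hb : b = Move.neg j
    · subst hb
      refine ⟨hi, ?_⟩
      show (Move.neg j).act h ((Move.pos j).act h i) ∈ grid d K h N
      rw [act_pos_neg]
      exact hi
    · exact absurd (by simp [crate, hb]) hc
  · by_cases ha : a = Move.pos j
    · subst ha; exact ⟨hi', hi'⟩
    · exact absurd (by simp [crate, ha]) hc
  · show Move.act h a i ∈ grid d K h N ∧ Move.act h b ((Move.pos j).act h i) ∈ grid d K h N
    simp only [crate] at hc
    split_ifs at hc with h1 h2 h3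
    · subst h1
      have hr1 : rate d K h σ N V i a ≠ 0 := fun e => hc (by
        rw [e]; exact min_eq_left (rate_nonneg _ _))
      have hr2 : rate d K h σ N V ((Move.pos j).act h i) a ≠ 0 := fun e => hc (by
        rw [e]; exact min_eq_right (rate_nonneg _ _))
      exact ⟨(mem_of_rate_ne_zero hr1).2, (mem_of_rate_ne_zero hr2).2⟩
    · obtain ⟨ha, hb⟩ := h2
      subst ha
      have hrn : 0 ≤ rate d K h σ N V i b := rate_nonneg i b
      have hr : rate d K h σ N V ((Move.pos j).act h i) b ≠ 0 := fun e => hc (by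
        rw [e]
        exact max_eq_right (by linarith))
      exact ⟨hi', (mem_of_rate_ne_zero hr).2⟩
    · obtain ⟨ha, hb⟩ := h3
      subst hb
      have hrn : 0 ≤ rate d K h σ N V ((Move.pos j).act h i) a :=
        rate_nonneg ((Move.pos j).act h i) a
      have hr : rate d K h σ N V i a ≠ 0 := fun e => hc (by
        rw [e]
        exact max_eq_right (by linarith))
      refine ⟨(mem_of_rate_ne_zero hr).2, ?_⟩
      show (Move.neg j).act h ((Move.pos j).act h i) ∈ grid d K h N
      rw [act_pos_neg]
      exact hi
    · exact absurd rfl hc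

lemma pcoup_mem (hi : i ∈ grid d K h N) (hi' : (Move.pos j).act h i ∈ grid d K h N)
    {q : Option (Move d) × Option (Move d)} (hp : pcoup d K h σ N V i j q ≠ 0) :
    actO h q.1 i ∈ grid d K h N ∧ actO h q.2 ((Move.pos j).act h i) ∈ grid d K h N := by
  by_cases hq : q = (none, none)
  · subst hq; exact ⟨hi, hi'⟩
  · rw [pcoup_ne hq] at hp
    have hcr : crate d K h σ N V i j q.1 q.2 ≠ 0 := fun e => hp (by rw [e, zero_div])
    exact crate_ne_zero_mem hi hi' hcr

lemma pcoup_dist (hh : 0 < h) {q : Option (Move d) × Option (Move d)}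
    (hq1 : q ≠ (some (Move.pos j), none)) (hq2 : q ≠ (none, some (Move.neg j)))
    (hp : pcoup d K h σ N V i j q ≠ 0) :
    graphDist (actO h q.1 i) (actO h q.2 ((Move.pos j).act h i)) = h := by
  have habs : |h| = h := abs_of_pos hh
  by_cases hq : q = (none, none)
  · subst hq
    show graphDist i ((Move.pos j).act h i) = h
    rw [graphDist_act_self]; exact habs
  · have hcr : crate d K h σ N V i j q.1 q.2 ≠ 0 := by
      rw [pcoup_ne hq] at hp
      exact fun e => hp (by rw [e, zero_div])
    rcases q with ⟨_ | a, _ | b⟩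
    · exact absurd rfl hq
    · by_cases hb : b = Move.neg j
      · exact absurd (by rw [hb]) hq2
      · exact absurd (by simp [crate, hb]) hcr
    · by_cases ha : a = Move.pos j
      · exact absurd (by rw [ha]) hq1
      · exact absurd (by simp [crate, ha]) hcr
    · have hcr' : crate d K h σ N V i j (some a) (some b) ≠ 0 := hcr
      simp only [crate] at hcr'
      split_ifs at hcr' with h1 h2 h3
      · subst h1
        show graphDist (Move.act h a i) (Move.act h a ((Move.pos j).act h i)) = h
        rw [graphDist_act_act, graphDist_act_self]
        exact habs
      · obtain ⟨ha, hb⟩ := h2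
        subst ha
        show graphDist ((Move.pos j).act h i) (Move.act h b ((Move.pos j).act h i)) = h
        rw [graphDist_act_self]
        exact habs
      · obtain ⟨ha, hb⟩ := h3
        subst hb
        show graphDist (Move.act h a i) ((Move.neg j).act h ((Move.pos j).act h i)) = h
        rw [act_pos_neg, graphDist_comm, graphDist_act_self]
        exact habs
      · exact absurd rfl hcr'

lemma sum_identity (hA3 : A3 d K h σ N V) (hi : i ∈ grid d K h N)
    (hi' : (Move.pos j).act h i ∈ grid d K h N) :
    ∑ b : Move d, rate d K h σ N V ((Move.pos j).act h i) b
      = (∑ a : Move d, rate d K h σ N V i a)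
        + kminus d K h σ N V ((Move.pos j).act h i) j - kplus d K h σ N V i j := by
  rw [sum_move_eq j (fun b => rate d K h σ N V ((Move.pos j).act h i) b),
    sum_move_eq j (fun a => rate d K h σ N V i a)]
  unfold kplus kminus
  rw [act_pos_neg]
  have tri : ∑ b ∈ univ.filter (fun b : Move d => b.dir ≠ j),
        rate d K h σ N V ((Move.pos j).act h i) b
      - ∑ b ∈ univ.filter (fun b : Move d => b.dir ≠ j), rate d K h σ N V i b
      + ∑ b ∈ univ.filter (fun b : Move d => b.dir ≠ j),
        max (rate d K h σ N V i b - rate d K h σ N V ((Move.pos j).act h i) b) 0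
      - ∑ b ∈ univ.filter (fun b : Move d => b.dir ≠ j),
        max (rate d K h σ N V ((Move.pos j).act h i) b - rate d K h σ N V i b) 0 = 0 := by
    rw [← Finset.sum_sub_distrib, ← Finset.sum_add_distrib, ← Finset.sum_sub_distrib]
    refine Finset.sum_eq_zero fun b _ => ?_
    rcases le_total (rate d K h σ N V i b) (rate d K h σ N V ((Move.pos j).act h i) b)
      with hle | hle
    · rw [max_eq_right (by linarith), max_eq_left (by linarith)]
      ring
    · rw [max_eq_left (by linarith), max_eq_right (by linarith)]
      ring
  linarith

def nbrC (d : ℕ) (K h σ : ℝ) (N : ℕ) (V : Pt d → ℝ) (i : Pt d) (j : Fin d)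
    (x' y' : Pt d) : ℝ :=
  ∑ q : Option (Move d) × Option (Move d),
    if actO h q.1 i = x' ∧ actO h q.2 ((Move.pos j).act h i) = y'
    then pcoup d K h σ N V i j q else 0

end WC
namespace WC
open Finset

variable {d : ℕ} {K h σ : ℝ} {N : ℕ} {V : Pt d → ℝ} {i : Pt d} {j : Fin d}

lemma kappa_bddBelow (hA3 : A3 d K h σ N V) :
    BddBelow { r : ℝ | ∃ j : Fin d, ∃ i ∈ grid d K h N,
      (Move.pos j).act h i ∈ grid d K h N ∧
      r = kplus d K h σ N V i j + kminus d K h σ N V ((Move.pos j).act h i) j } := by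
  refine ⟨0, ?_⟩
  rintro r ⟨j, i, hi, hi', rfl⟩
  exact add_nonneg (kplus_pos hA3 hi hi').le (kminus_i'_pos hA3 hi hi').le

lemma kappaPhi_nonneg (hA3 : A3 d K h σ N V) : 0 ≤ kappaPhi d K h σ N V := by
  apply Real.sInf_nonneg
  rintro r ⟨j, i, hi, hi', rfl⟩
  exact add_nonneg (kplus_pos hA3 hi hi').le (kminus_i'_pos hA3 hi hi').le

lemma kappaPhi_le (hA3 : A3 d K h σ N V) (hi : i ∈ grid d K h N)
    (hi' : (Move.pos j).act h i ∈ grid d K h N) :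
    kappaPhi d K h σ N V
      ≤ kplus d K h σ N V i j + kminus d K h σ N V ((Move.pos j).act h i) j :=
  csInf_le (kappa_bddBelow hA3) ⟨j, i, hi, hi', rfl⟩

lemma kappaPhi_tau_le_one (hσ : 0 < σ) (hh : 0 < h) (hd : 0 < d) (hN2 : 2 ≤ N)
    (hA3 : A3 d K h σ N V) :
    kappaPhi d K h σ N V * tauStep d K h σ N V ≤ 1 := by
  obtain ⟨i, hi, j, hi'⟩ := exists_neighbor (K := K) (h := h) (N := N) hd hN2
  have hT := Tcal_pos (K := K) (V := V) hσ hh hd hN2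
  have h1 := kappaPhi_le hA3 hi hi'
  have h2 : kplus d K h σ N V i j ≤ rate d K h σ N V i (Move.pos j) := kplus_le
  have h3 : kminus d K h σ N V ((Move.pos j).act h i) j
      ≤ rate d K h σ N V ((Move.pos j).act h i) (Move.neg j) := kminus_i'_le
  have h4 : rate d K h σ N V i (Move.pos j) ≤ ∑ γ : Move d, rate d K h σ N V i γ :=
    Finset.single_le_sum (fun γ _ => rate_nonneg _ γ) (Finset.mem_univ _)
  have h5 : rate d K h σ N V ((Move.pos j).act h i) (Move.neg j)
      ≤ ∑ γ : Move d, rate d K h σ N V ((Move.pos j).act h i) γ :=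
    Finset.single_le_sum (fun γ _ => rate_nonneg _ γ) (Finset.mem_univ _)
  have h6 := sum_rate_le_half (σ := σ) (V := V) hi
  have h7 := sum_rate_le_half (σ := σ) (V := V) hi'
  unfold tauStep
  rw [mul_one_div, div_le_one hT]
  linarith

lemma sum_pair_indicator {ι : Type*} [Fintype ι] (D : Pt d → Pt d → ℝ)
    (X Y : ι → Pt d) (p : ι → ℝ) :
    ∑ x' ∈ grid d K h N, ∑ y' ∈ grid d K h N,
      D x' y' * (∑ q : ι, if X q = x' ∧ Y q = y' then p q else 0)
    = ∑ q : ι, (if X q ∈ grid d K h N then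
        (if Y q ∈ grid d K h N then D (X q) (Y q) * p q else 0) else 0) := by
  have e1 : ∀ x' ∈ grid d K h N, ∀ y' ∈ grid d K h N,
      D x' y' * (∑ q : ι, if X q = x' ∧ Y q = y' then p q else 0)
      = ∑ q : ι, (if X q = x' ∧ Y q = y' then D (X q) (Y q) * p q else 0) := by
    intro x' _ y' _
    rw [Finset.mul_sum]
    refine Finset.sum_congr rfl fun q _ => ?_
    by_cases hc : X q = x' ∧ Y q = y'
    · rw [if_pos hc, if_pos hc, hc.1, hc.2]
    · rw [if_neg hc, if_neg hc, mul_zero]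
  rw [Finset.sum_congr rfl fun x' hx' => Finset.sum_congr rfl fun y' hy' => e1 x' hx' y' hy']
  have swap1 : ∀ x' : Pt d,
      (∑ y' ∈ grid d K h N, ∑ q : ι,
        if X q = x' ∧ Y q = y' then D (X q) (Y q) * p q else 0)
      = ∑ q : ι, ∑ y' ∈ grid d K h N,
        if X q = x' ∧ Y q = y' then D (X q) (Y q) * p q else 0 :=
    fun x' => Finset.sum_comm
  rw [Finset.sum_congr rfl fun x' _ => swap1 x']
  have swap2 : (∑ x' ∈ grid d K h N, ∑ q : ι, ∑ y' ∈ grid d K h N,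
      if X q = x' ∧ Y q = y' then D (X q) (Y q) * p q else 0)
      = ∑ q : ι, ∑ x' ∈ grid d K h N, ∑ y' ∈ grid d K h N,
      if X q = x' ∧ Y q = y' then D (X q) (Y q) * p q else 0 :=
    Finset.sum_comm
  rw [swap2]
  refine Finset.sum_congr rfl fun q _ => ?_
  have e2 : ∀ x' ∈ grid d K h N,
      (∑ y' ∈ grid d K h N, if X q = x' ∧ Y q = y' then D (X q) (Y q) * p q else 0)
      = if X q = x' then (if Y q ∈ grid d K h N then D (X q) (Y q) * p q else 0) else 0 := by
    intro x' _
    by_cases hA : X q = x'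
    · rw [if_pos hA]
      have e3 : ∀ y' ∈ grid d K h N,
          (if X q = x' ∧ Y q = y' then D (X q) (Y q) * p q else 0)
          = if Y q = y' then D (X q) (Y q) * p q else 0 := by
        intro y' _
        by_cases hB : Y q = y'
        · rw [if_pos ⟨hA, hB⟩, if_pos hB]
        · rw [if_neg fun hc => hB hc.2, if_neg hB]
      rw [Finset.sum_congr rfl e3, Finset.sum_ite_eq]
    · rw [if_neg hA]
      exact Finset.sum_eq_zero fun y' _ => if_neg fun hc => hA hc.1
  rw [Finset.sum_congr rfl e2, Finset.sum_ite_eq]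

lemma nbrC_cost_eq (i : Pt d) (j : Fin d) :
    ∑ x' ∈ grid d K h N, ∑ y' ∈ grid d K h N,
      graphDist x' y' * (∑ q : Option (Move d) × Option (Move d), if actO h q.1 i = x' ∧ actO h q.2 ((Move.pos j).act h i) = y' then pcoup d K h σ N V i j q else 0)
    = ∑ q : Option (Move d) × Option (Move d), (if actO h q.1 i ∈ grid d K h N then
        (if actO h q.2 ((Move.pos j).act h i) ∈ grid d K h N then graphDist (actO h q.1 i) (actO h q.2 ((Move.pos j).act h i)) * pcoup d K h σ N V i j q else 0) else 0) := by
  have e1 : ∀ x' ∈ grid d K h N, ∀ y' ∈ grid d K h N,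
      graphDist x' y' * (∑ q : Option (Move d) × Option (Move d), if actO h q.1 i = x' ∧ actO h q.2 ((Move.pos j).act h i) = y' then pcoup d K h σ N V i j q else 0)
      = ∑ q : Option (Move d) × Option (Move d), (if actO h q.1 i = x' ∧ actO h q.2 ((Move.pos j).act h i) = y' then graphDist (actO h q.1 i) (actO h q.2 ((Move.pos j).act h i)) * pcoup d K h σ N V i j q else 0) := by
    intro x' _ y' _
    rw [Finset.mul_sum]
    refine Finset.sum_congr rfl fun q _ => ?_
    by_cases hc : actO h q.1 i = x' ∧ actO h q.2 ((Move.pos j).act h i) = y'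
    · rw [if_pos hc, if_pos hc, hc.1, hc.2]
    · rw [if_neg hc, if_neg hc, mul_zero]
  rw [Finset.sum_congr rfl fun x' hx' => Finset.sum_congr rfl fun y' hy' => e1 x' hx' y' hy']
  have swap1 : ∀ x' : Pt d,
      (∑ y' ∈ grid d K h N, ∑ q : Option (Move d) × Option (Move d),
        if actO h q.1 i = x' ∧ actO h q.2 ((Move.pos j).act h i) = y' then graphDist (actO h q.1 i) (actO h q.2 ((Move.pos j).act h i)) * pcoup d K h σ N V i j q else 0)
      = ∑ q : Option (Move d) × Option (Move d), ∑ y' ∈ grid d K h N,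
        if actO h q.1 i = x' ∧ actO h q.2 ((Move.pos j).act h i) = y' then graphDist (actO h q.1 i) (actO h q.2 ((Move.pos j).act h i)) * pcoup d K h σ N V i j q else 0 :=
    fun x' => Finset.sum_comm
  rw [Finset.sum_congr rfl fun x' _ => swap1 x']
  have swap2 : (∑ x' ∈ grid d K h N, ∑ q : Option (Move d) × Option (Move d), ∑ y' ∈ grid d K h N,
      if actO h q.1 i = x' ∧ actO h q.2 ((Move.pos j).act h i) = y' then graphDist (actO h q.1 i) (actO h q.2 ((Move.pos j).act h i)) * pcoup d K h σ N V i j q else 0)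
      = ∑ q : Option (Move d) × Option (Move d), ∑ x' ∈ grid d K h N, ∑ y' ∈ grid d K h N,
      if actO h q.1 i = x' ∧ actO h q.2 ((Move.pos j).act h i) = y' then graphDist (actO h q.1 i) (actO h q.2 ((Move.pos j).act h i)) * pcoup d K h σ N V i j q else 0 :=
    Finset.sum_comm
  rw [swap2]
  refine Finset.sum_congr rfl fun q _ => ?_
  have e2 : ∀ x' ∈ grid d K h N,
      (∑ y' ∈ grid d K h N, if actO h q.1 i = x' ∧ actO h q.2 ((Move.pos j).act h i) = y' then graphDist (actO h q.1 i) (actO h q.2 ((Move.pos j).act h i)) * pcoup d K h σ N V i j q else 0)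
      = if actO h q.1 i = x' then (if actO h q.2 ((Move.pos j).act h i) ∈ grid d K h N then graphDist (actO h q.1 i) (actO h q.2 ((Move.pos j).act h i)) * pcoup d K h σ N V i j q else 0) else 0 := by
    intro x' _
    by_cases hA : actO h q.1 i = x'
    · rw [if_pos hA]
      have e3 : ∀ y' ∈ grid d K h N,
          (if actO h q.1 i = x' ∧ actO h q.2 ((Move.pos j).act h i) = y' then graphDist (actO h q.1 i) (actO h q.2 ((Move.pos j).act h i)) * pcoup d K h σ N V i j q else 0)
          = if actO h q.2 ((Move.pos j).act h i) = y' then graphDist (actO h q.1 i) (actO h q.2 ((Move.pos j).act h i)) * pcoup d K h σ N V i j q else 0 := by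
        intro y' _
        by_cases hB : actO h q.2 ((Move.pos j).act h i) = y'
        · rw [if_pos ⟨hA, hB⟩, if_pos hB]
        · rw [if_neg fun hc => hB hc.2, if_neg hB]
      rw [Finset.sum_congr rfl e3, Finset.sum_ite_eq]
    · rw [if_neg hA]
      exact Finset.sum_eq_zero fun y' _ => if_neg fun hc => hA hc.1
  rw [Finset.sum_congr rfl e2, Finset.sum_ite_eq]

lemma nbrC_nonneg (hA3 : A3 d K h σ N V) (hg : ∃ x, x ∈ grid d K h N)
    (hi : i ∈ grid d K h N) (hi' : (Move.pos j).act h i ∈ grid d K h N)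
    (x' y' : Pt d) : 0 ≤ nbrC d K h σ N V i j x' y' := by
  refine Finset.sum_nonneg fun q _ => ?_
  split
  · exact pcoup_nonneg hA3 hg hi hi' q
  · exact le_refl 0

lemma nbrC_fst (hA3 : A3 d K h σ N V) (hi : i ∈ grid d K h N)
    (hi' : (Move.pos j).act h i ∈ grid d K h N) {x' : Pt d} (hx' : x' ∈ grid d K h N) :
    ∑ y' ∈ grid d K h N, nbrC d K h σ N V i j x' y' = piKernel d K h σ N V i x' := by
  unfold nbrC
  rw [Finset.sum_comm]
  have inner : ∀ q : Option (Move d) × Option (Move d),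
      (∑ y' ∈ grid d K h N,
        if actO h q.1 i = x' ∧ actO h q.2 ((Move.pos j).act h i) = y'
        then pcoup d K h σ N V i j q else 0)
      = if actO h q.1 i = x' then pcoup d K h σ N V i j q else 0 := by
    intro q
    by_cases hA : actO h q.1 i = x'
    · rw [if_pos hA]
      have e : ∀ y' ∈ grid d K h N,
          (if actO h q.1 i = x' ∧ actO h q.2 ((Move.pos j).act h i) = y'
           then pcoup d K h σ N V i j q else 0)
          = if actO h q.2 ((Move.pos j).act h i) = y'
            then pcoup d K h σ N V i j q else 0 := by
        intro y' _
        by_cases hB : actO h q.2 ((Move.pos j).act h i) = y'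
        · rw [if_pos ⟨hA, hB⟩, if_pos hB]
        · rw [if_neg fun hc => hB hc.2, if_neg hB]
      rw [Finset.sum_congr rfl e, Finset.sum_ite_eq]
      by_cases hm : actO h q.2 ((Move.pos j).act h i) ∈ grid d K h N
      · rw [if_pos hm]
      · rw [if_neg hm]
        by_cases hp : pcoup d K h σ N V i j q = 0
        · rw [hp]
        · exact absurd (pcoup_mem hi hi' hp).2 hm
    · rw [if_neg hA]
      exact Finset.sum_eq_zero fun y' _ => if_neg fun hc => hA hc.1
  rw [Finset.sum_congr rfl fun q _ => inner q, Fintype.sum_prod_type]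
  have pull : ∀ q1 : Option (Move d),
      (∑ q2 : Option (Move d),
        if actO h q1 i = x' then pcoup d K h σ N V i j (q1, q2) else 0)
      = if actO h q1 i = x'
        then ∑ q2 : Option (Move d), pcoup d K h σ N V i j (q1, q2) else 0 := by
    intro q1
    split_ifs <;> simp
  rw [Finset.sum_congr rfl fun q1 _ => pull q1, Fintype.sum_option]
  have rowNone : ∑ q2 : Option (Move d), pcoup d K h σ N V i j (none, q2)
      = 1 - ∑ γ : Move d, prate d K h σ N V i γ := by
    rw [Fintype.sum_option, pcoup_nn]
    have e : ∀ b : Move d, pcoup d K h σ N V i j (none, some b)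
        = crate d K h σ N V i j none (some b) / Tcal d K h σ N V := fun b =>
      pcoup_ne (by simp)
    rw [Finset.sum_congr rfl fun b _ => e b]
    have e2 : ∑ q' ∈ univ.filter
        (fun q' : Option (Move d) × Option (Move d) => q' ≠ (none, none)),
        crate d K h σ N V i j q'.1 q'.2 / Tcal d K h σ N V
        = ((∑ a : Move d, rate d K h σ N V i a)
            + kminus d K h σ N V ((Move.pos j).act h i) j) / Tcal d K h σ N V := by
      rw [← Finset.sum_div, sum_crate_ne_nn hA3 hi hi']
    have e3 : ∑ b : Move d, crate d K h σ N V i j none (some b) / Tcal d K h σ N V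
        = kminus d K h σ N V ((Move.pos j).act h i) j / Tcal d K h σ N V := by
      rw [← Finset.sum_div, crate_none_row]
    rw [e2, e3]
    unfold prate
    rw [← Finset.sum_div, add_div]
    ring
  have rowSome : ∀ a : Move d,
      (∑ q2 : Option (Move d), pcoup d K h σ N V i j (some a, q2))
      = prate d K h σ N V i a := by
    intro a
    have e : ∀ q2 : Option (Move d), pcoup d K h σ N V i j (some a, q2)
        = crate d K h σ N V i j (some a) q2 / Tcal d K h σ N V := fun q2 =>
      pcoup_ne (by simp)
    rw [Finset.sum_congr rfl fun q2 _ => e q2, ← Finset.sum_div, crate_row hA3 hi hi' a]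
    rfl
  rw [rowNone]
  simp only [rowSome]
  unfold piKernel
  exact add_comm _ _

lemma nbrC_snd (hA3 : A3 d K h σ N V) (hi : i ∈ grid d K h N)
    (hi' : (Move.pos j).act h i ∈ grid d K h N) {y' : Pt d} (hy' : y' ∈ grid d K h N) :
    ∑ x' ∈ grid d K h N, nbrC d K h σ N V i j x' y'
      = piKernel d K h σ N V ((Move.pos j).act h i) y' := by
  unfold nbrC
  rw [Finset.sum_comm]
  have inner : ∀ q : Option (Move d) × Option (Move d),
      (∑ x' ∈ grid d K h N,
        if actO h q.1 i = x' ∧ actO h q.2 ((Move.pos j).act h i) = y'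
        then pcoup d K h σ N V i j q else 0)
      = if actO h q.2 ((Move.pos j).act h i) = y'
        then pcoup d K h σ N V i j q else 0 := by
    intro q
    by_cases hB : actO h q.2 ((Move.pos j).act h i) = y'
    · rw [if_pos hB]
      have e : ∀ x' ∈ grid d K h N,
          (if actO h q.1 i = x' ∧ actO h q.2 ((Move.pos j).act h i) = y'
           then pcoup d K h σ N V i j q else 0)
          = if actO h q.1 i = x' then pcoup d K h σ N V i j q else 0 := by
        intro x' _
        by_cases hA : actO h q.1 i = x'
        · rw [if_pos ⟨hA, hB⟩, if_pos hA]
        · rw [if_neg fun hc => hA hc.1, if_neg hA]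
      rw [Finset.sum_congr rfl e, Finset.sum_ite_eq]
      by_cases hm : actO h q.1 i ∈ grid d K h N
      · rw [if_pos hm]
      · rw [if_neg hm]
        by_cases hp : pcoup d K h σ N V i j q = 0
        · rw [hp]
        · exact absurd (pcoup_mem hi hi' hp).1 hm
    · rw [if_neg hB]
      exact Finset.sum_eq_zero fun x' _ => if_neg fun hc => hB hc.2
  rw [Finset.sum_congr rfl fun q _ => inner q, Fintype.sum_prod_type_right]
  have pull : ∀ q2 : Option (Move d),
      (∑ q1 : Option (Move d),
        if actO h q2 ((Move.pos j).act h i) = y'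
        then pcoup d K h σ N V i j (q1, q2) else 0)
      = if actO h q2 ((Move.pos j).act h i) = y'
        then ∑ q1 : Option (Move d), pcoup d K h σ N V i j (q1, q2) else 0 := by
    intro q2
    split_ifs <;> simp
  rw [Finset.sum_congr rfl fun q2 _ => pull q2, Fintype.sum_option]
  have colNone : ∑ q1 : Option (Move d), pcoup d K h σ N V i j (q1, none)
      = 1 - ∑ γ : Move d, prate d K h σ N V ((Move.pos j).act h i) γ := by
    rw [Fintype.sum_option, pcoup_nn]
    have e : ∀ a : Move d, pcoup d K h σ N V i j (some a, none)
        = crate d K h σ N V i j (some a) none / Tcal d K h σ N V := fun a =>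
      pcoup_ne (by simp)
    rw [Finset.sum_congr rfl fun a _ => e a]
    have e2 : ∑ q' ∈ univ.filter
        (fun q' : Option (Move d) × Option (Move d) => q' ≠ (none, none)),
        crate d K h σ N V i j q'.1 q'.2 / Tcal d K h σ N V
        = ((∑ a : Move d, rate d K h σ N V i a)
            + kminus d K h σ N V ((Move.pos j).act h i) j) / Tcal d K h σ N V := by
      rw [← Finset.sum_div, sum_crate_ne_nn hA3 hi hi']
    have e3 : ∑ a : Move d, crate d K h σ N V i j (some a) none / Tcal d K h σ N V
        = kplus d K h σ N V i j / Tcal d K h σ N V := by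
      rw [← Finset.sum_div, crate_pos_none]
    rw [e2, e3]
    unfold prate
    rw [← Finset.sum_div, sum_identity hA3 hi hi', sub_div, add_div]
    ring
  have colSome : ∀ b : Move d,
      (∑ q1 : Option (Move d), pcoup d K h σ N V i j (q1, some b))
      = prate d K h σ N V ((Move.pos j).act h i) b := by
    intro b
    rw [Fintype.sum_option]
    have e0 : pcoup d K h σ N V i j (none, some b)
        = crate d K h σ N V i j none (some b) / Tcal d K h σ N V := pcoup_ne (by simp)
    have e : ∀ a : Move d, pcoup d K h σ N V i j (some a, some b)
        = crate d K h σ N V i j (some a) (some b) / Tcal d K h σ N V := fun a =>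
      pcoup_ne (by simp)
    rw [e0, Finset.sum_congr rfl fun a _ => e a, ← Finset.sum_div, ← add_div,
      crate_col hA3 hi hi' b]
    rfl
  rw [colNone]
  simp only [colSome]
  unfold piKernel
  exact add_comm _ _

lemma nbrC_isCpl (hA3 : A3 d K h σ N V) (hg : ∃ x, x ∈ grid d K h N)
    (hi : i ∈ grid d K h N) (hi' : (Move.pos j).act h i ∈ grid d K h N) :
    IsCpl d K h N (piKernel d K h σ N V i)
      (piKernel d K h σ N V ((Move.pos j).act h i)) (nbrC d K h σ N V i j) :=
  ⟨fun x' _ y' _ => nbrC_nonneg hA3 hg hi hi' x' y',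
   fun x' hx' => nbrC_fst hA3 hi hi' hx',
   fun y' hy' => nbrC_snd hA3 hi hi' hy'⟩

end WC
namespace WC
open Finset

variable {d : ℕ} {K h σ : ℝ} {N : ℕ} {V : Pt d → ℝ} {i : Pt d} {j : Fin d}

lemma nbrC_cost (hσ : 0 < σ) (hh : 0 < h) (hd : 0 < d) (hN2 : 2 ≤ N)
    (hA3 : A3 d K h σ N V) (hi : i ∈ grid d K h N)
    (hi' : (Move.pos j).act h i ∈ grid d K h N) :
    cost d K h N graphDist (nbrC d K h σ N V i j)
      ≤ (1 - kappaPhi d K h σ N V * tauStep d K h σ N V) * h := by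
  have hT := Tcal_pos (K := K) (V := V) hσ hh hd hN2
  have hg : ∃ x, x ∈ grid d K h N := grid_nonempty (by omega)
  have step1 : cost d K h N graphDist (nbrC d K h σ N V i j)
      = ∑ q : Option (Move d) × Option (Move d),
          (if actO h q.1 i ∈ grid d K h N then
            (if actO h q.2 ((Move.pos j).act h i) ∈ grid d K h N then
              graphDist (actO h q.1 i) (actO h q.2 ((Move.pos j).act h i))
                * pcoup d K h σ N V i j q
             else 0) else 0) := by
    unfold cost nbrC
    exact nbrC_cost_eq i j
  rw [step1]
  set m1 : Option (Move d) × Option (Move d) := (some (Move.pos j), none) with hm1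
  set m2 : Option (Move d) × Option (Move d) := (none, some (Move.neg j)) with hm2
  have hm12 : m1 ≠ m2 := by rw [hm1, hm2]; simp
  have tb : ∀ q : Option (Move d) × Option (Move d),
      (if actO h q.1 i ∈ grid d K h N then
        (if actO h q.2 ((Move.pos j).act h i) ∈ grid d K h N then
          graphDist (actO h q.1 i) (actO h q.2 ((Move.pos j).act h i))
            * pcoup d K h σ N V i j q
         else 0) else 0)
      ≤ (if q = m1 ∨ q = m2 then 0 else h) * pcoup d K h σ N V i j q := by
    intro q
    by_cases hq1 : q = m1
    · subst hq1
      rw [if_pos (Or.inl rfl), zero_mul]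
      have hD : graphDist (actO h m1.1 i) (actO h m1.2 ((Move.pos j).act h i)) = 0 := by
        show graphDist ((Move.pos j).act h i) ((Move.pos j).act h i) = 0
        exact graphDist_self _
      rw [hD]
      split_ifs <;> simp
    · by_cases hq2 : q = m2
      · subst hq2
        rw [if_pos (Or.inr rfl), zero_mul]
        have hD : graphDist (actO h m2.1 i) (actO h m2.2 ((Move.pos j).act h i)) = 0 := by
          show graphDist i ((Move.neg j).act h ((Move.pos j).act h i)) = 0
          rw [act_pos_neg]
          exact graphDist_self _
        rw [hD]
        split_ifs <;> simp
      · have hR : (if q = m1 ∨ q = m2 then (0:ℝ) else h) = h := if_neg (by tauto)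
        rw [hR]
        by_cases hp : pcoup d K h σ N V i j q = 0
        · rw [hp, mul_zero]
          split_ifs <;> simp
        · have hmem := pcoup_mem hi hi' hp
          rw [if_pos hmem.1, if_pos hmem.2, pcoup_dist hh hq1 hq2 hp]
  refine (Finset.sum_le_sum fun q _ => tb q).trans ?_
  have expand : ∀ q : Option (Move d) × Option (Move d),
      (if q = m1 ∨ q = m2 then 0 else h) * pcoup d K h σ N V i j q
      = h * pcoup d K h σ N V i j q
        - (if q = m1 then h * pcoup d K h σ N V i j q else 0)
        - (if q = m2 then h * pcoup d K h σ N V i j q else 0) := by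
    intro q
    by_cases h1 : q = m1
    · subst h1
      rw [if_pos (Or.inl rfl), if_pos rfl, if_neg hm12]
      ring
    · by_cases h2 : q = m2
      · subst h2
        rw [if_pos (Or.inr rfl), if_neg h1, if_pos rfl]
        ring
      · rw [if_neg (by tauto), if_neg h1, if_neg h2]
        ring
  rw [Finset.sum_congr rfl fun q _ => expand q]
  rw [Finset.sum_sub_distrib, Finset.sum_sub_distrib]
  rw [← Finset.mul_sum, sum_pcoup hA3 hi hi', mul_one]
  rw [Finset.sum_ite_eq' univ m1 (fun q => h * pcoup d K h σ N V i j q),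
    Finset.sum_ite_eq' univ m2 (fun q => h * pcoup d K h σ N V i j q),
    if_pos (Finset.mem_univ _), if_pos (Finset.mem_univ _)]
  have pm1 : pcoup d K h σ N V i j m1 = kplus d K h σ N V i j / Tcal d K h σ N V := by
    rw [pcoup_ne (by rw [hm1]; simp)]
    show crate d K h σ N V i j (some (Move.pos j)) none / Tcal d K h σ N V = _
    simp [crate]
  have pm2 : pcoup d K h σ N V i j m2
      = kminus d K h σ N V ((Move.pos j).act h i) j / Tcal d K h σ N V := by
    rw [pcoup_ne (by rw [hm2]; simp)]
    show crate d K h σ N V i j none (some (Move.neg j)) / Tcal d K h σ N V = _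
    simp [crate]
  rw [pm1, pm2]
  have hκ := kappaPhi_le hA3 hi hi'
  have hτ : kappaPhi d K h σ N V * tauStep d K h σ N V
      ≤ kplus d K h σ N V i j / Tcal d K h σ N V
        + kminus d K h σ N V ((Move.pos j).act h i) j / Tcal d K h σ N V := by
    have h1 : kappaPhi d K h σ N V * (1 / Tcal d K h σ N V)
        ≤ (kplus d K h σ N V i j + kminus d K h σ N V ((Move.pos j).act h i) j)
          * (1 / Tcal d K h σ N V) :=
      mul_le_mul_of_nonneg_right hκ (by positivity)
    unfold tauStep
    calc kappaPhi d K h σ N V * (1 / Tcal d K h σ N V)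
        ≤ (kplus d K h σ N V i j + kminus d K h σ N V ((Move.pos j).act h i) j)
          * (1 / Tcal d K h σ N V) := h1
      _ = kplus d K h σ N V i j / Tcal d K h σ N V
          + kminus d K h σ N V ((Move.pos j).act h i) j / Tcal d K h σ N V := by ring
  nlinarith [mul_nonneg hh.le (sub_nonneg.2 hτ)]
end WC
namespace WC
open Finset

variable {d : ℕ} {K h σ : ℝ} {N : ℕ} {V : Pt d → ℝ}

lemma exists_pair_coupling (hσ : 0 < σ) (hh : 0 < h) (hd : 0 < d) (hN2 : 2 ≤ N)
    (hA3 : A3 d K h σ N V) :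
    ∀ m : ℕ, ∀ x ∈ grid d K h N, ∀ y ∈ grid d K h N, graphDist x y ≤ (m : ℝ) * h →
    ∃ Γ : Pt d → Pt d → ℝ,
      IsCpl d K h N (piKernel d K h σ N V x) (piKernel d K h σ N V y) Γ ∧
      cost d K h N graphDist Γ
        ≤ (1 - kappaPhi d K h σ N V * tauStep d K h σ N V) * graphDist x y := by
  have hg : ∃ x, x ∈ grid d K h N := grid_nonempty (by omega)
  intro m
  induction m with
  | zero =>
    intro x hx y hy hdist
    have hxy : x = y := eq_of_graphDist_eq_zero
      (le_antisymm (by simpa using hdist) (graphDist_nonneg x y))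
    subst hxy
    refine ⟨fun a b => if a = b then piKernel d K h σ N V x a else 0,
      isCpl_diag (fun k _ => piKernel_nonneg hg hx k), ?_⟩
    rw [cost_diag graphDist_self, graphDist_self, mul_zero]
  | succ m ih =>
    intro x hx y hy hdist
    by_cases hxy : x = y
    · subst hxy
      refine ⟨fun a b => if a = b then piKernel d K h σ N V x a else 0,
        isCpl_diag (fun k _ => piKernel_nonneg hg hx k), ?_⟩
      rw [cost_diag graphDist_self, graphDist_self, mul_zero]
    · have hj : ∃ j, x j ≠ y j := by
        by_contra hc
        push_neg at hc
        exact hxy (PiLp.ext hc)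
      obtain ⟨j, hjne⟩ := hj
      rcases lt_or_gt_of_ne hjne with hlt | hlt
      · obtain ⟨hz, hge⟩ := grid_step hh hx hy hlt
        have hzdist : graphDist (x + EuclideanSpace.single j h) y = graphDist x y - h :=
          graphDist_step hh hge
        have hzd2 : graphDist ((Move.pos j).act h x) y = graphDist x y - h := hzdist
        have hz' : (Move.pos j).act h x ∈ grid d K h N := hz
        have hdist' : graphDist ((Move.pos j).act h x) y ≤ (m : ℝ) * h := by
          rw [hzd2]
          push_cast at hdist
          linarith
        obtain ⟨Γ₂, hΓ₂, hcost₂⟩ := ih ((Move.pos j).act h x) hz' y hy hdist'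
        have hΓ₁ := nbrC_isCpl hA3 hg hx hz'
        have hcost₁ := nbrC_cost hσ hh hd hN2 hA3 hx hz'
        refine ⟨glue d K h N (piKernel d K h σ N V ((Move.pos j).act h x))
          (nbrC d K h σ N V x j) Γ₂, glue_isCpl hΓ₁ hΓ₂, ?_⟩
        have := glue_cost_le hΓ₁ hΓ₂
        rw [hzd2] at hcost₂
        have hc0 : 0 ≤ 1 - kappaPhi d K h σ N V * tauStep d K h σ N V := by
          have := kappaPhi_tau_le_one (K := K) (V := V) hσ hh hd hN2 hA3
          linarith
        nlinarith [hcost₂, hcost₁, this]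
      · obtain ⟨hz, hge⟩ := grid_step hh hy hx hlt
        have hzdist : graphDist (y + EuclideanSpace.single j h) x = graphDist y x - h :=
          graphDist_step hh hge
        have hzd2 : graphDist ((Move.pos j).act h y) x = graphDist y x - h := hzdist
        have hz' : (Move.pos j).act h y ∈ grid d K h N := hz
        have hdist' : graphDist ((Move.pos j).act h y) x ≤ (m : ℝ) * h := by
          rw [hzd2, graphDist_comm y x]
          push_cast at hdist
          linarith
        obtain ⟨Γ₂, hΓ₂, hcost₂⟩ := ih ((Move.pos j).act h y) hz' x hx hdist'
        have hΓ₁ := nbrC_isCpl hA3 hg hy hz'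
        have hcost₁ := nbrC_cost hσ hh hd hN2 hA3 hy hz'
        have hglue := glue_isCpl hΓ₁ hΓ₂
        have hgcost := glue_cost_le hΓ₁ hΓ₂
        refine ⟨fun a b => glue d K h N (piKernel d K h σ N V ((Move.pos j).act h y))
          (nbrC d K h σ N V y j) Γ₂ b a, isCpl_transpose hglue, ?_⟩
        rw [cost_transpose graphDist_comm]
        rw [hzd2] at hcost₂
        have hc0 : 0 ≤ 1 - kappaPhi d K h σ N V * tauStep d K h σ N V := by
          have := kappaPhi_tau_le_one (K := K) (V := V) hσ hh hd hN2 hA3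
          linarith
        have hcomm : graphDist y x = graphDist x y := graphDist_comm y x
        nlinarith [hcost₂, hcost₁, hgcost]

lemma step_coupling (hσ : 0 < σ) (hh : 0 < h) (hd : 0 < d) (hN2 : 2 ≤ N)
    (hA3 : A3 d K h σ N V) {x y : Pt d} (hx : x ∈ grid d K h N) (hy : y ∈ grid d K h N) :
    ∃ Γ : Pt d → Pt d → ℝ,
      IsCpl d K h N (piKernel d K h σ N V x) (piKernel d K h σ N V y) Γ ∧
      cost d K h N graphDist Γ
        ≤ (1 - kappaPhi d K h σ N V * tauStep d K h σ N V) * graphDist x y := by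
  refine exists_pair_coupling hσ hh hd hN2 hA3 ⌈graphDist x y / h⌉₊ x hx y hy ?_
  have h1 : graphDist x y / h ≤ (⌈graphDist x y / h⌉₊ : ℝ) := Nat.le_ceil _
  rw [div_le_iff₀ hh] at h1
  exact h1

lemma Wd1_step (hσ : 0 < σ) (hh : 0 < h) (hd : 0 < d) (hN2 : 2 ≤ N)
    (hA3 : A3 d K h σ N V) {ν η : Pt d → ℝ} {γc : Pt d → Pt d → ℝ}
    (hγ1 : ∀ x ∈ grid d K h N, ∀ y ∈ grid d K h N, 0 ≤ γc x y)
    (hγ2 : ∀ x ∈ grid d K h N, ∑ y ∈ grid d K h N, γc x y = ν x)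
    (hγ3 : ∀ y ∈ grid d K h N, ∑ x ∈ grid d K h N, γc x y = η y) :
    Wd1 d K h N (piMeas d K h σ N V ν) (piMeas d K h σ N V η)
      ≤ (1 - kappaPhi d K h σ N V * tauStep d K h σ N V)
        * ∑ x ∈ grid d K h N, ∑ y ∈ grid d K h N, graphDist x y * γc x y := by
  classical
  have hg : ∃ x, x ∈ grid d K h N := grid_nonempty (by omega)
  have hstep : ∀ x y : Pt d, ∃ Γ : Pt d → Pt d → ℝ,
      x ∈ grid d K h N → y ∈ grid d K h N →
      IsCpl d K h N (piKernel d K h σ N V x) (piKernel d K h σ N V y) Γ ∧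
      cost d K h N graphDist Γ
        ≤ (1 - kappaPhi d K h σ N V * tauStep d K h σ N V) * graphDist x y := by
    intro x y
    by_cases hxy : x ∈ grid d K h N ∧ y ∈ grid d K h N
    · obtain ⟨Γ, hΓ, hc⟩ := step_coupling hσ hh hd hN2 hA3 hxy.1 hxy.2
      exact ⟨Γ, fun _ _ => ⟨hΓ, hc⟩⟩
    · exact ⟨fun _ _ => 0, fun hx hy => absurd ⟨hx, hy⟩ hxy⟩
  choose F hF using hstep
  set γ' : Pt d → Pt d → ℝ := fun x' y' =>
    ∑ x ∈ grid d K h N, ∑ y ∈ grid d K h N, γc x y * F x y x' y' with hγ'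
  have hcpl : IsCpl d K h N (piMeas d K h σ N V ν) (piMeas d K h σ N V η) γ' := by
    refine ⟨fun x' hx' y' hy' => ?_, fun x' hx' => ?_, fun y' hy' => ?_⟩
    · exact Finset.sum_nonneg fun x hx => Finset.sum_nonneg fun y hy =>
        mul_nonneg (hγ1 x hx y hy) ((hF x y hx hy).1.1 x' hx' y' hy')
    · have swap : ∑ y' ∈ grid d K h N, γ' x' y'
          = ∑ x ∈ grid d K h N, ∑ y ∈ grid d K h N, ∑ y' ∈ grid d K h N,
            γc x y * F x y x' y' := by
        simp only [hγ']
        rw [Finset.sum_comm]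
        exact Finset.sum_congr rfl fun x _ => Finset.sum_comm
      rw [swap]
      have e1 : ∀ x ∈ grid d K h N, ∀ y ∈ grid d K h N,
          (∑ y' ∈ grid d K h N, γc x y * F x y x' y')
          = γc x y * piKernel d K h σ N V x x' := by
        intro x hx y hy
        rw [← Finset.mul_sum, (hF x y hx hy).1.2.1 x' hx']
      rw [Finset.sum_congr rfl fun x hx => Finset.sum_congr rfl fun y hy => e1 x hx y hy]
      have e2 : ∀ x ∈ grid d K h N,
          (∑ y ∈ grid d K h N, γc x y * piKernel d K h σ N V x x')
          = ν x * piKernel d K h σ N V x x' := by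
        intro x hx
        rw [← Finset.sum_mul, hγ2 x hx]
      rw [Finset.sum_congr rfl e2, piMeas, if_pos hx']
    · have swap : ∑ x' ∈ grid d K h N, γ' x' y'
          = ∑ x ∈ grid d K h N, ∑ y ∈ grid d K h N, ∑ x' ∈ grid d K h N,
            γc x y * F x y x' y' := by
        simp only [hγ']
        rw [Finset.sum_comm]
        exact Finset.sum_congr rfl fun x _ => Finset.sum_comm
      rw [swap]
      have e1 : ∀ x ∈ grid d K h N, ∀ y ∈ grid d K h N,
          (∑ x' ∈ grid d K h N, γc x y * F x y x' y')
          = γc x y * piKernel d K h σ N V y y' := by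
        intro x hx y hy
        rw [← Finset.mul_sum, (hF x y hx hy).1.2.2 y' hy']
      rw [Finset.sum_congr rfl fun x hx => Finset.sum_congr rfl fun y hy => e1 x hx y hy]
      have swap2 : ∑ x ∈ grid d K h N, ∑ y ∈ grid d K h N,
          γc x y * piKernel d K h σ N V y y'
          = ∑ y ∈ grid d K h N, ∑ x ∈ grid d K h N,
          γc x y * piKernel d K h σ N V y y' := Finset.sum_comm
      rw [swap2]
      have e2 : ∀ y ∈ grid d K h N,
          (∑ x ∈ grid d K h N, γc x y * piKernel d K h σ N V y y')
          = η y * piKernel d K h σ N V y y' := by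
        intro y hy
        rw [← Finset.sum_mul, hγ3 y hy]
      rw [Finset.sum_congr rfl e2, piMeas, if_pos hy']
  have unf : ∀ x' y' : Pt d, γ' x' y'
      = ∑ q ∈ (grid d K h N) ×ˢ (grid d K h N), γc q.1 q.2 * F q.1 q.2 x' y' := by
    intro x' y'
    rw [Finset.sum_product]
  have key : ∑ x' ∈ grid d K h N, ∑ y' ∈ grid d K h N, graphDist x' y' * γ' x' y'
      = ∑ q ∈ (grid d K h N) ×ˢ (grid d K h N), γc q.1 q.2 *
          (∑ p ∈ (grid d K h N) ×ˢ (grid d K h N),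
            graphDist p.1 p.2 * F q.1 q.2 p.1 p.2) := by
    rw [← Finset.sum_product']
    calc ∑ p ∈ (grid d K h N) ×ˢ (grid d K h N), graphDist p.1 p.2 * γ' p.1 p.2
        = ∑ p ∈ (grid d K h N) ×ˢ (grid d K h N),
            ∑ q ∈ (grid d K h N) ×ˢ (grid d K h N),
              γc q.1 q.2 * (graphDist p.1 p.2 * F q.1 q.2 p.1 p.2) := by
          refine Finset.sum_congr rfl fun p _ => ?_
          rw [unf p.1 p.2, Finset.mul_sum]
          exact Finset.sum_congr rfl fun q _ => by ring
      _ = ∑ q ∈ (grid d K h N) ×ˢ (grid d K h N),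
            ∑ p ∈ (grid d K h N) ×ˢ (grid d K h N),
              γc q.1 q.2 * (graphDist p.1 p.2 * F q.1 q.2 p.1 p.2) := Finset.sum_comm
      _ = ∑ q ∈ (grid d K h N) ×ˢ (grid d K h N), γc q.1 q.2 *
            (∑ p ∈ (grid d K h N) ×ˢ (grid d K h N),
              graphDist p.1 p.2 * F q.1 q.2 p.1 p.2) := by
          exact Finset.sum_congr rfl fun q _ => (Finset.mul_sum _ _ _).symm
  have hcost : cost d K h N graphDist γ'
      ≤ (1 - kappaPhi d K h σ N V * tauStep d K h σ N V)
        * ∑ x ∈ grid d K h N, ∑ y ∈ grid d K h N, graphDist x y * γc x y := by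
    unfold cost
    rw [key]
    have bound : ∀ q ∈ (grid d K h N) ×ˢ (grid d K h N),
        γc q.1 q.2 * (∑ p ∈ (grid d K h N) ×ˢ (grid d K h N),
          graphDist p.1 p.2 * F q.1 q.2 p.1 p.2)
        ≤ γc q.1 q.2 * ((1 - kappaPhi d K h σ N V * tauStep d K h σ N V)
            * graphDist q.1 q.2) := by
      intro q hq
      rw [Finset.mem_product] at hq
      have eF : ∑ p ∈ (grid d K h N) ×ˢ (grid d K h N),
          graphDist p.1 p.2 * F q.1 q.2 p.1 p.2
          = cost d K h N graphDist (F q.1 q.2) := by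
        unfold cost
        exact Finset.sum_product' _ _ (fun a b => graphDist a b * F q.1 q.2 a b)
      rw [eF]
      exact mul_le_mul_of_nonneg_left ((hF q.1 q.2 hq.1 hq.2).2) (hγ1 q.1 hq.1 q.2 hq.2)
    refine (Finset.sum_le_sum bound).trans (le_of_eq ?_)
    rw [Finset.sum_product, Finset.mul_sum]
    refine Finset.sum_congr rfl fun x _ => ?_
    rw [Finset.mul_sum]
    exact Finset.sum_congr rfl fun y _ => by ring
  exact (Wgen_le_cost (fun x _ y _ => graphDist_nonneg x y) hcpl).trans hcost

end WC
namespace WC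
open Finset

variable {d : ℕ} {K h σ : ℝ} {N : ℕ} {V : Pt d → ℝ}

lemma Wd1_contract (hσ : 0 < σ) (hh : 0 < h) (hd : 0 < d) (hN2 : 2 ≤ N)
    (hA3 : A3 d K h σ N V) {ν η : Pt d → ℝ}
    (hν : IsProbOn d K h N ν) (hη : IsProbOn d K h N η) :
    Wd1 d K h N (piMeas d K h σ N V ν) (piMeas d K h σ N V η)
      ≤ (1 - kappaPhi d K h σ N V * tauStep d K h σ N V) * Wd1 d K h N ν η := by
  have hc0 : 0 ≤ 1 - kappaPhi d K h σ N V * tauStep d K h σ N V := by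
    have := kappaPhi_tau_le_one (K := K) (V := V) hσ hh hd hN2 hA3
    linarith
  set S : Set ℝ := { r : ℝ | ∃ γc : Pt d → Pt d → ℝ,
    (∀ x ∈ grid d K h N, ∀ y ∈ grid d K h N, 0 ≤ γc x y) ∧
    (∀ x ∈ grid d K h N, ∑ y ∈ grid d K h N, γc x y = ν x) ∧
    (∀ y ∈ grid d K h N, ∑ x ∈ grid d K h N, γc x y = η y) ∧
    r = ∑ x ∈ grid d K h N, ∑ y ∈ grid d K h N, graphDist x y * γc x y } with hS
  have hWd : Wd1 d K h N ν η = sInf S := rfl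
  have hne : S.Nonempty := by
    obtain ⟨h1, h2, h3⟩ := isCpl_prod hν hη
    exact ⟨_, (fun x y => ν x * η y), h1, h2, h3, rfl⟩
  have hstep : ∀ r ∈ S, Wd1 d K h N (piMeas d K h σ N V ν) (piMeas d K h σ N V η)
      ≤ (1 - kappaPhi d K h σ N V * tauStep d K h σ N V) * r := by
    rintro r ⟨γc, h1, h2, h3, rfl⟩
    exact Wd1_step hσ hh hd hN2 hA3 h1 h2 h3
  rcases eq_or_lt_of_le hc0 with hc | hc
  · obtain ⟨r, hr⟩ := hne
    have h1 := hstep r hr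
    rw [← hc] at h1 ⊢
    rw [zero_mul] at h1 ⊢
    exact h1
  · have hdiv : ∀ r ∈ S,
        Wd1 d K h N (piMeas d K h σ N V ν) (piMeas d K h σ N V η)
          / (1 - kappaPhi d K h σ N V * tauStep d K h σ N V) ≤ r := fun r hr =>
      (div_le_iff₀ hc).2 (by rw [mul_comm]; exact hstep r hr)
    have h2 := le_csInf hne hdiv
    rw [← hWd] at h2
    rw [div_le_iff₀ hc] at h2
    rw [mul_comm] at h2
    exact h2

lemma norm_le_graphDist (x y : Pt d) : ‖x - y‖ ≤ graphDist x y := by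
  rw [EuclideanSpace.norm_eq]
  have e : ∑ j, ‖(x - y) j‖ ^ 2 = ∑ j, |x j - y j| ^ 2 :=
    Finset.sum_congr rfl fun j _ => by
      rw [show (x - y) j = x j - y j from rfl, Real.norm_eq_abs]
  rw [e]
  have hb : ∑ j, |x j - y j| ^ 2 ≤ (graphDist x y) ^ 2 := by
    unfold graphDist
    rw [sq, Finset.sum_mul]
    refine Finset.sum_le_sum fun j _ => ?_
    rw [sq]
    exact mul_le_mul_of_nonneg_left
      (Finset.single_le_sum (f := fun k => |x k - y k|) (fun k _ => abs_nonneg _)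
        (Finset.mem_univ j)) (abs_nonneg _)
  calc √(∑ j, |x j - y j| ^ 2) ≤ √((graphDist x y) ^ 2) := Real.sqrt_le_sqrt hb
    _ = graphDist x y := Real.sqrt_sq (graphDist_nonneg x y)

lemma graphDist_le_sqrt_mul (x y : Pt d) :
    graphDist x y ≤ Real.sqrt d * ‖x - y‖ := by
  have h1 : (graphDist x y) ^ 2 ≤ (d : ℝ) * ∑ j, |x j - y j| ^ 2 := by
    unfold graphDist
    have := sq_sum_le_card_mul_sum_sq (s := (univ : Finset (Fin d)))
      (f := fun j => |x j - y j|)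
    simpa using this
  have h2 : ‖x - y‖ ^ 2 = ∑ j, |x j - y j| ^ 2 := by
    rw [EuclideanSpace.norm_eq, Real.sq_sqrt (Finset.sum_nonneg fun j _ => sq_nonneg _)]
    exact Finset.sum_congr rfl fun j _ => by
      rw [show (x - y) j = x j - y j from rfl, Real.norm_eq_abs]
  calc graphDist x y = √((graphDist x y) ^ 2) := (Real.sqrt_sq (graphDist_nonneg x y)).symm
    _ ≤ √((d : ℝ) * (‖x - y‖ ^ 2)) := Real.sqrt_le_sqrt (by rw [h2]; exact h1)
    _ = √(d : ℝ) * √(‖x - y‖ ^ 2) := Real.sqrt_mul (by positivity) _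
    _ = √(d : ℝ) * ‖x - y‖ := by rw [Real.sqrt_sq (norm_nonneg _)]

lemma W1_le_Wd1 {ν η : Pt d → ℝ} (hν : IsProbOn d K h N ν) (hη : IsProbOn d K h N η) :
    W1 d K h N ν η ≤ Wd1 d K h N ν η := by
  unfold Wd1 Wgen
  refine le_csInf ?_ ?_
  · obtain ⟨h1, h2, h3⟩ := isCpl_prod hν hη
    exact ⟨_, (fun x y => ν x * η y), h1, h2, h3, rfl⟩
  · rintro r ⟨γc, h1, h2, h3, rfl⟩
    unfold W1
    refine (Wgen_le_cost (fun x _ y _ => norm_nonneg _) ⟨h1, h2, h3⟩).trans ?_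
    unfold cost
    exact Finset.sum_le_sum fun x hx => Finset.sum_le_sum fun y hy =>
      mul_le_mul_of_nonneg_right (norm_le_graphDist x y) (h1 x hx y hy)

lemma Wd1_le_sqrtd_W1 (hd : 0 < d) {ν η : Pt d → ℝ}
    (hν : IsProbOn d K h N ν) (hη : IsProbOn d K h N η) :
    Wd1 d K h N ν η ≤ Real.sqrt d * W1 d K h N ν η := by
  have hsd : (0:ℝ) < Real.sqrt d := Real.sqrt_pos.2 (by exact_mod_cast hd)
  set S : Set ℝ := { r : ℝ | ∃ γc : Pt d → Pt d → ℝ,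
    (∀ x ∈ grid d K h N, ∀ y ∈ grid d K h N, 0 ≤ γc x y) ∧
    (∀ x ∈ grid d K h N, ∑ y ∈ grid d K h N, γc x y = ν x) ∧
    (∀ y ∈ grid d K h N, ∑ x ∈ grid d K h N, γc x y = η y) ∧
    r = ∑ x ∈ grid d K h N, ∑ y ∈ grid d K h N, ‖x - y‖ * γc x y } with hS
  have hW1 : W1 d K h N ν η = sInf S := rfl
  have hne : S.Nonempty := by
    obtain ⟨h1, h2, h3⟩ := isCpl_prod hν hη
    exact ⟨_, (fun x y => ν x * η y), h1, h2, h3, rfl⟩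
  have hstep : ∀ r ∈ S, Wd1 d K h N ν η ≤ Real.sqrt d * r := by
    rintro r ⟨γc, h1, h2, h3, rfl⟩
    refine (Wgen_le_cost (fun x _ y _ => graphDist_nonneg x y) ⟨h1, h2, h3⟩).trans ?_
    unfold cost
    rw [Finset.mul_sum]
    refine Finset.sum_le_sum fun x hx => ?_
    rw [Finset.mul_sum]
    refine Finset.sum_le_sum fun y hy => ?_
    calc graphDist x y * γc x y ≤ (Real.sqrt d * ‖x - y‖) * γc x y :=
          mul_le_mul_of_nonneg_right (graphDist_le_sqrt_mul x y) (h1 x hx y hy)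
      _ = Real.sqrt d * (‖x - y‖ * γc x y) := by ring
  have hdiv : ∀ r ∈ S, Wd1 d K h N ν η / Real.sqrt d ≤ r := fun r hr =>
    (div_le_iff₀ hsd).2 (by rw [mul_comm]; exact hstep r hr)
  have h2 := le_csInf hne hdiv
  rw [← hW1] at h2
  rw [div_le_iff₀ hsd] at h2
  rw [mul_comm] at h2
  exact h2

lemma Wgen_congr {D : Pt d → Pt d → ℝ} {ν ν' η η' : Pt d → ℝ}
    (hν : ∀ x ∈ grid d K h N, ν x = ν' x) (hη : ∀ y ∈ grid d K h N, η y = η' y) :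
    Wgen d K h N D ν η = Wgen d K h N D ν' η' := by
  unfold Wgen
  congr 1
  ext r
  constructor
  · rintro ⟨γc, h1, h2, h3, h4⟩
    exact ⟨γc, h1, fun x hx => (h2 x hx).trans (hν x hx),
      fun y hy => (h3 y hy).trans (hη y hy), h4⟩
  · rintro ⟨γc, h1, h2, h3, h4⟩
    exact ⟨γc, h1, fun x hx => (h2 x hx).trans (hν x hx).symm,
      fun y hy => (h3 y hy).trans (hη y hy).symm, h4⟩

lemma rate_degenerate (hh : 0 < h) (hN1 : N = 1) :
    ∀ i ∈ grid d K h N, ∀ γ : Move d, rate d K h σ N V i γ = 0 := by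
  intro i hi γ
  by_contra hr
  obtain ⟨hi2, hact⟩ := mem_of_rate_ne_zero hr
  obtain ⟨n, hn⟩ := mem_grid_iff.1 hi2 γ.dir
  obtain ⟨m, hm⟩ := mem_grid_iff.1 hact γ.dir
  have hn0 : (n : ℕ) = 0 := by have := n.isLt; omega
  have hm0 : (m : ℕ) = 0 := by have := m.isLt; omega
  have hco : γ.act h i γ.dir = i γ.dir + h ∨ γ.act h i γ.dir = i γ.dir - h := by
    cases γ with
    | pos j =>
        left
        show (i + EuclideanSpace.single j h) (Move.dir (Move.pos j)) = _
        rw [show Move.dir (Move.pos j) = j from rfl, add_single_apply, if_pos rfl]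
    | neg j =>
        right
        show (i - EuclideanSpace.single j h) (Move.dir (Move.neg j)) = _
        rw [show Move.dir (Move.neg j) = j from rfl, sub_single_apply, if_pos rfl]
  rw [hn0] at hn
  rw [hm0] at hm
  rcases hco with hco | hco <;> rw [hco, hn] at hm <;> norm_num at hm <;> linarith

lemma Tcal_degenerate (hg : ∃ x, x ∈ grid d K h N)
    (hrate : ∀ i ∈ grid d K h N, ∀ γ : Move d, rate d K h σ N V i γ = 0) :
    Tcal d K h σ N V = 0 := by
  unfold Tcal
  have himg : ((fun i => ∑ γ : Move d, rate d K h σ N V i γ) ''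
      ((grid d K h N : Finset (Pt d)) : Set (Pt d))) = {0} := by
    ext r
    simp only [Set.mem_image, Set.mem_singleton_iff]
    constructor
    · rintro ⟨i, hi, rfl⟩
      exact Finset.sum_eq_zero fun γ _ => hrate i (by simpa using hi) γ
    · rintro rfl
      obtain ⟨x, hx⟩ := hg
      exact ⟨x, by simpa using hx, Finset.sum_eq_zero fun γ _ => hrate x hx γ⟩
  rw [himg, csSup_singleton]
  ring

lemma piMeas_degenerate
    (hrate : ∀ i ∈ grid d K h N, ∀ γ : Move d, rate d K h σ N V i γ = 0)
    (ν : Pt d → ℝ) {k : Pt d} (hk : k ∈ grid d K h N) :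
    piMeas d K h σ N V ν k = ν k := by
  unfold piMeas
  rw [if_pos hk]
  have hP : ∀ x ∈ grid d K h N,
      piKernel d K h σ N V x k = if x = k then 1 else 0 := by
    intro x hx
    unfold piKernel prate
    have hz : ∀ γ : Move d, rate d K h σ N V x γ = 0 := hrate x hx
    simp [hz]
  calc ∑ x ∈ grid d K h N, ν x * piKernel d K h σ N V x k
      = ∑ x ∈ grid d K h N, (if x = k then ν x else 0) :=
        Finset.sum_congr rfl (fun x hx => by rw [hP x hx]; split_ifs <;> ring)
    _ = ν k := by rw [Finset.sum_ite_eq' (grid d K h N) k (fun x => ν x), if_pos hk]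

lemma iterate_degenerate
    (hrate : ∀ i ∈ grid d K h N, ∀ γ : Move d, rate d K h σ N V i γ = 0)
    (ν : Pt d → ℝ) : ∀ n : ℕ, ∀ k ∈ grid d K h N,
      ((piMeas d K h σ N V)^[n] ν) k = ν k := by
  intro n
  induction n with
  | zero => intro k _; rfl
  | succ n ih =>
      intro k hk
      rw [Function.iterate_succ_apply', piMeas_degenerate hrate _ hk]
      exact ih k hk

lemma iterate_prob (hg : ∃ x, x ∈ grid d K h N) {ν : Pt d → ℝ}
    (hν : IsProbOn d K h N ν) :
    ∀ n : ℕ, IsProbOn d K h N ((piMeas d K h σ N V)^[n] ν) := by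
  intro n
  induction n with
  | zero => exact hν
  | succ n ih =>
      rw [Function.iterate_succ_apply']
      exact isProbOn_piMeas hg ih

end WC
/-- Exponential contraction in Wasserstein distance for the discrete-time scheme
(Theorem 4.3). -/
theorem wasserstein_contraction_discrete_time
    (d : ℕ) (K h σ : ℝ) (N : ℕ) (V : Pt d → ℝ) (hp : Params d K h σ N V)
    (hA3 : A3 d K h σ N V)
    (ν η : Pt d → ℝ) (hν : IsProbOn d K h N ν) (hη : IsProbOn d K h N η) (n : ℕ) :
    Wd1 d K h N ((piMeas d K h σ N V)^[n] ν) ((piMeas d K h σ N V)^[n] η)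
      ≤ Real.exp (-(kappaPhi d K h σ N V) * n * tauStep d K h σ N V)
          * Wd1 d K h N ν η ∧
    W1 d K h N ((piMeas d K h σ N V)^[n] ν) ((piMeas d K h σ N V)^[n] η)
      ≤ Real.sqrt d * Real.exp (-(kappaPhi d K h σ N V) * n * tauStep d K h σ N V)
          * W1 d K h N ν η := by
  classical
  obtain ⟨hd1, hK, hh, hNh, hσ, -⟩ := hp
  have hd : 0 < d := hd1
  have hN0 : 0 < N := WC.N_pos hK hh hNh
  have hg : ∃ x, x ∈ grid d K h N := WC.grid_nonempty hN0
  by_cases hN2 : 2 ≤ N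
  · -- nondegenerate case
    have hc0 : 0 ≤ 1 - kappaPhi d K h σ N V * tauStep d K h σ N V := by
      have := WC.kappaPhi_tau_le_one (K := K) (V := V) hσ hh hd hN2 hA3
      linarith
    have hprobν := WC.iterate_prob (σ := σ) (V := V) hg hν
    have hprobη := WC.iterate_prob (σ := σ) (V := V) hg hη
    have hWd1nonneg : 0 ≤ Wd1 d K h N ν η :=
      WC.Wgen_nonneg (fun x _ y _ => WC.graphDist_nonneg x y) ν η
    have main : ∀ m : ℕ,
        Wd1 d K h N ((piMeas d K h σ N V)^[m] ν) ((piMeas d K h σ N V)^[m] η)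
        ≤ (1 - kappaPhi d K h σ N V * tauStep d K h σ N V) ^ m * Wd1 d K h N ν η := by
      intro m
      induction m with
      | zero => simp
      | succ m ih =>
        rw [Function.iterate_succ_apply', Function.iterate_succ_apply']
        calc Wd1 d K h N (piMeas d K h σ N V ((piMeas d K h σ N V)^[m] ν))
              (piMeas d K h σ N V ((piMeas d K h σ N V)^[m] η))
            ≤ (1 - kappaPhi d K h σ N V * tauStep d K h σ N V)
              * Wd1 d K h N ((piMeas d K h σ N V)^[m] ν) ((piMeas d K h σ N V)^[m] η) :=
              WC.Wd1_contract hσ hh hd hN2 hA3 (hprobν m) (hprobη m)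
          _ ≤ (1 - kappaPhi d K h σ N V * tauStep d K h σ N V)
              * ((1 - kappaPhi d K h σ N V * tauStep d K h σ N V) ^ m
                * Wd1 d K h N ν η) := mul_le_mul_of_nonneg_left ih hc0
          _ = (1 - kappaPhi d K h σ N V * tauStep d K h σ N V) ^ (m + 1)
              * Wd1 d K h N ν η := by ring
    have hexp : (1 - kappaPhi d K h σ N V * tauStep d K h σ N V) ^ n
        ≤ Real.exp (-(kappaPhi d K h σ N V) * n * tauStep d K h σ N V) := by
      have h1 : 1 - kappaPhi d K h σ N V * tauStep d K h σ N V
          ≤ Real.exp (-(kappaPhi d K h σ N V * tauStep d K h σ N V)) := by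
        have := Real.add_one_le_exp
          (-(kappaPhi d K h σ N V * tauStep d K h σ N V))
        linarith
      calc (1 - kappaPhi d K h σ N V * tauStep d K h σ N V) ^ n
          ≤ (Real.exp (-(kappaPhi d K h σ N V * tauStep d K h σ N V))) ^ n :=
            pow_le_pow_left₀ hc0 h1 n
        _ = Real.exp ((n : ℝ) * (-(kappaPhi d K h σ N V * tauStep d K h σ N V))) :=
            (Real.exp_nat_mul _ n).symm
        _ = Real.exp (-(kappaPhi d K h σ N V) * n * tauStep d K h σ N V) := by
            congr 1
            ring
    have hWd1n : Wd1 d K h N ((piMeas d K h σ N V)^[n] ν) ((piMeas d K h σ N V)^[n] η)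
        ≤ Real.exp (-(kappaPhi d K h σ N V) * n * tauStep d K h σ N V)
          * Wd1 d K h N ν η :=
      (main n).trans (mul_le_mul_of_nonneg_right hexp hWd1nonneg)
    refine ⟨hWd1n, ?_⟩
    have hW1a : W1 d K h N ((piMeas d K h σ N V)^[n] ν) ((piMeas d K h σ N V)^[n] η)
        ≤ Wd1 d K h N ((piMeas d K h σ N V)^[n] ν) ((piMeas d K h σ N V)^[n] η) :=
      WC.W1_le_Wd1 (hprobν n) (hprobη n)
    have hW1b : Wd1 d K h N ν η ≤ Real.sqrt d * W1 d K h N ν η :=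
      WC.Wd1_le_sqrtd_W1 hd hν hη
    calc W1 d K h N ((piMeas d K h σ N V)^[n] ν) ((piMeas d K h σ N V)^[n] η)
        ≤ Wd1 d K h N ((piMeas d K h σ N V)^[n] ν) ((piMeas d K h σ N V)^[n] η) := hW1a
      _ ≤ Real.exp (-(kappaPhi d K h σ N V) * n * tauStep d K h σ N V)
          * Wd1 d K h N ν η := hWd1n
      _ ≤ Real.exp (-(kappaPhi d K h σ N V) * n * tauStep d K h σ N V)
          * (Real.sqrt d * W1 d K h N ν η) :=
            mul_le_mul_of_nonneg_left hW1b (Real.exp_nonneg _)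
      _ = Real.sqrt d * Real.exp (-(kappaPhi d K h σ N V) * n * tauStep d K h σ N V)
          * W1 d K h N ν η := by ring
  · -- degenerate case N = 1
    have hN1 : N = 1 := by omega
    have hrate := WC.rate_degenerate (K := K) (σ := σ) (V := V) hh hN1
    have hT0 : Tcal d K h σ N V = 0 := WC.Tcal_degenerate hg hrate
    have hτ0 : tauStep d K h σ N V = 0 := by
      unfold tauStep
      rw [hT0]
      simp
    rw [hτ0, mul_zero, Real.exp_zero]
    have heq1 : Wd1 d K h N ((piMeas d K h σ N V)^[n] ν) ((piMeas d K h σ N V)^[n] η)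
        = Wd1 d K h N ν η :=
      WC.Wgen_congr (WC.iterate_degenerate hrate ν n) (WC.iterate_degenerate hrate η n)
    have heq2 : W1 d K h N ((piMeas d K h σ N V)^[n] ν) ((piMeas d K h σ N V)^[n] η)
        = W1 d K h N ν η :=
      WC.Wgen_congr (WC.iterate_degenerate hrate ν n) (WC.iterate_degenerate hrate η n)
    constructor
    · rw [heq1, one_mul]
    · rw [heq2]
      have hW1nonneg : 0 ≤ W1 d K h N ν η :=
        WC.Wgen_nonneg (fun x _ y _ => norm_nonneg _) ν η
      have hsd : 1 ≤ Real.sqrt d := Real.one_le_sqrt.2 (by exact_mod_cast hd)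
      nlinarith
end
end

section
/- One-step path-coupling contraction for the discrete-time kernel: assume (A3), fix j=1,…,d and i with i,i+he_j∈𝒦_h, and define 𝐩 on (G∪{e})² by 𝐩(γ,γ̄) = 𝐜(i,i+he_j,γ,γ̄)/𝒯 for (γ,γ̄)≠(e,e) and 𝐩(e,e) = 1 − Σ_{(γ,γ̄)≠(e,e)} 𝐜(i,i+he_j,γ,γ̄)/𝒯. Then 𝐩 is a probability distribution on (G∪{e})², its marginals reproduce the one-step kernels, i.e. for every x∈𝒦_h one has Σ_{γ,γ̄ : γi=x} 𝐩(γ,γ̄) = π(i,x) and Σ_{γ,γ̄ : γ̄(i+he_j)=x} 𝐩(γ,γ̄) = π(i+he_j,x), and Σ_{γ,γ̄∈G∪{e}} 𝐩(γ,γ̄)·dist(γi, γ̄(i+he_j)) ≤ (1 − κ_φ·τ)·dist(i, i+he_j) = (1 − κ_φ·τ)·h. -/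
open scoped BigOperators Classical RealInnerProductSpace
open Finset MeasureTheory

section Aux
open Finset
variable {d : ℕ}

lemma DPC.rate_nonneg (K h σ : ℝ) (N : ℕ) (V : Pt d → ℝ) (x : Pt d) (γ : Move d) :
    0 ≤ rate d K h σ N V x γ := by
  unfold rate; split
  · positivity
  · exact le_refl 0

lemma DPC.rate_pos {K h σ : ℝ} {N : ℕ} {V : Pt d → ℝ} (hh : 0 < h) (hσ : 0 < σ)
    {x : Pt d} {γ : Move d} (hx : x ∈ grid d K h N) (hx' : γ.act h x ∈ grid d K h N) :
    0 < rate d K h σ N V x γ := by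
  unfold rate; rw [if_pos ⟨hx, hx'⟩]
  exact mul_pos (div_pos (pow_pos hσ 2) (pow_pos hh 2)) (Real.exp_pos _)

lemma DPC.graphDist_symm (x y : Pt d) : graphDist x y = graphDist y x := by
  simp [graphDist, abs_sub_comm]

lemma DPC.graphDist_single (x : Pt d) (k : Fin d) (t : ℝ) :
    graphDist x (x + EuclideanSpace.single k t) = |t| := by
  unfold graphDist
  rw [Finset.sum_eq_single k]
  · simp [EuclideanSpace.single_apply, abs_sub_comm]
  · intro l _ hl; simp [EuclideanSpace.single_apply, hl]
  · simp

lemma DPC.graphDist_single' (x : Pt d) (k : Fin d) (t : ℝ) :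
    graphDist x (x - EuclideanSpace.single k t) = |t| := by
  unfold graphDist
  rw [Finset.sum_eq_single k]
  · simp [EuclideanSpace.single_apply]
  · intro l _ hl; simp [EuclideanSpace.single_apply, hl]
  · simp

lemma DPC.graphDist_add_right (x y v : Pt d) :
    graphDist (x + v) (y + v) = graphDist x y := by
  unfold graphDist
  refine Finset.sum_congr rfl fun l _ => ?_
  simp

lemma DPC.sum_move_split (j : Fin d) (f : Move d → ℝ) :
    ∑ γ : Move d, f γ
      = f (Move.pos j) + f (Move.neg j)
        + ∑ γ ∈ Finset.univ.filter (fun γ : Move d => γ.dir ≠ j), f γ := by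
  classical
  rw [← Finset.sum_filter_add_sum_filter_not Finset.univ (fun γ : Move d => γ.dir = j)]
  have : Finset.univ.filter (fun γ : Move d => γ.dir = j) = {Move.pos j, Move.neg j} := by
    ext γ; rw [Finset.mem_filter]; cases γ <;> simp [Move.dir]
  rw [this, Finset.sum_pair (by simp)]

end Aux
section Aux2
open Finset
variable {d : ℕ} {K h σ : ℝ} {N : ℕ} {V : Pt d → ℝ} {j : Fin d} {i : Pt d}

lemma DPC.neg_act_pos : (Move.neg j).act h ((Move.pos j).act h i) = i := by
  simp [Move.act]

lemma DPC.min_add_max (a b : ℝ) : min a b + max (a - b) 0 = a := by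
  rcases le_total a b with hab | hab
  · rw [min_eq_left hab, max_eq_right (by linarith)]; ring
  · rw [min_eq_right hab, max_eq_left (by linarith)]; ring

lemma DPC.dir_ne (a : Move d) (hap : a ≠ Move.pos j) (han : a ≠ Move.neg j) : a.dir ≠ j := by
  cases a <;> simp [Move.dir] <;> rintro rfl <;> simp_all

lemma DPC.S1all
    (hple : rate d K h σ N V ((Move.pos j).act h i) (Move.pos j) ≤ rate d K h σ N V i (Move.pos j))
    (hmle : rate d K h σ N V i (Move.neg j) ≤ rate d K h σ N V ((Move.pos j).act h i) (Move.neg j))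
    (a : Move d) :
    ∑ b : Option (Move d), crate d K h σ N V i j (some a) b = rate d K h σ N V i a := by
  classical
  rw [Fintype.sum_option, DPC.sum_move_split j]
  by_cases hap : a = Move.pos j
  · subst hap
    have h1 : crate d K h σ N V i j (some (Move.pos j)) none = kplus d K h σ N V i j := by
      simp [crate]
    have h2 : crate d K h σ N V i j (some (Move.pos j)) (some (Move.pos j))
        = rate d K h σ N V ((Move.pos j).act h i) (Move.pos j) := by
      simp [crate, min_eq_right hple]
    have h3 : crate d K h σ N V i j (some (Move.pos j)) (some (Move.neg j)) = 0 := by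
      simp [crate, Move.dir]
    have h4 : ∑ γ ∈ Finset.univ.filter (fun γ : Move d => γ.dir ≠ j),
        crate d K h σ N V i j (some (Move.pos j)) (some γ)
        = ∑ γ ∈ Finset.univ.filter (fun γ : Move d => γ.dir ≠ j),
          max (rate d K h σ N V ((Move.pos j).act h i) γ - rate d K h σ N V i γ) 0 := by
      refine Finset.sum_congr rfl fun b hb => ?_
      simp only [Finset.mem_filter, Finset.mem_univ, true_and] at hb
      have hne : Move.pos j ≠ b := by rintro rfl; exact hb rfl
      simp [crate, hne, hb]
    rw [h1, h2, h3, h4]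
    simp only [kplus]; ring
  · by_cases han : a = Move.neg j
    · subst han
      have h1 : crate d K h σ N V i j (some (Move.neg j)) none = 0 := by
        simp [crate]
      have h2 : crate d K h σ N V i j (some (Move.neg j)) (some (Move.pos j)) = 0 := by
        simp [crate, Move.dir]
      have h3 : crate d K h σ N V i j (some (Move.neg j)) (some (Move.neg j))
          = rate d K h σ N V i (Move.neg j) := by
        simp [crate, min_eq_left hmle]
      have h4 : ∑ γ ∈ Finset.univ.filter (fun γ : Move d => γ.dir ≠ j),
          crate d K h σ N V i j (some (Move.neg j)) (some γ) = 0 := by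
        refine Finset.sum_eq_zero fun b hb => ?_
        simp only [Finset.mem_filter, Finset.mem_univ, true_and] at hb
        have hne : Move.neg j ≠ b := by rintro rfl; exact hb rfl
        have hbj : b ≠ Move.neg j := fun hh => hne hh.symm
        simp [crate, hne, hbj, Move.dir]
      rw [h1, h2, h3, h4]; ring
    · have had : a.dir ≠ j := DPC.dir_ne a hap han
      have h1 : crate d K h σ N V i j (some a) none = 0 := by
        simp [crate, hap]
      have h2 : crate d K h σ N V i j (some a) (some (Move.pos j)) = 0 := by
        simp [crate, hap, Move.dir]
      have h3 : crate d K h σ N V i j (some a) (some (Move.neg j)) =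
          max (rate d K h σ N V i a
            - rate d K h σ N V ((Move.pos j).act h i) a) 0 := by
        simp [crate, hap, han, had]
      have h4 : ∑ γ ∈ Finset.univ.filter (fun γ : Move d => γ.dir ≠ j),
          crate d K h σ N V i j (some a) (some γ)
          = min (rate d K h σ N V i a)
              (rate d K h σ N V ((Move.pos j).act h i) a) := by
        rw [Finset.sum_eq_single_of_mem a (by simp [Finset.mem_filter, had])]
        · simp [crate]
        · intro b hb hne
          simp only [Finset.mem_filter, Finset.mem_univ, true_and] at hb
          have hab : a ≠ b := fun hh => hne hh.symm
          have hbj : b ≠ Move.neg j := by rintro rfl; exact hb rfl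
          simp [crate, hab, hap, hbj]
      rw [h1, h2, h3, h4]
      have := DPC.min_add_max (rate d K h σ N V i a)
        (rate d K h σ N V ((Move.pos j).act h i) a)
      linarith

end Aux2
section Aux3
open Finset
variable {d : ℕ} {K h σ : ℝ} {N : ℕ} {V : Pt d → ℝ} {j : Fin d} {i : Pt d}

lemma DPC.S1none :
    ∑ b : Option (Move d), crate d K h σ N V i j none b
      = kminus d K h σ N V ((Move.pos j).act h i) j := by
  classical
  rw [Fintype.sum_option]
  have h0 : crate d K h σ N V i j none none = 0 := by simp [crate]
  have h1 : ∑ b : Move d, crate d K h σ N V i j none (some b)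
      = kminus d K h σ N V ((Move.pos j).act h i) j := by
    rw [Finset.sum_eq_single_of_mem (Move.neg j) (Finset.mem_univ _)]
    · simp [crate]
    · intro b _ hne; simp [crate, hne]
  rw [h0, h1, zero_add]

lemma DPC.S2none :
    ∑ g : Option (Move d), crate d K h σ N V i j g none = kplus d K h σ N V i j := by
  classical
  rw [Fintype.sum_option]
  have h0 : crate d K h σ N V i j none none = 0 := by simp [crate]
  have h1 : ∑ a : Move d, crate d K h σ N V i j (some a) none = kplus d K h σ N V i j := by
    rw [Finset.sum_eq_single_of_mem (Move.pos j) (Finset.mem_univ _)]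
    · simp [crate]
    · intro a _ hne; simp [crate, hne]
  rw [h0, h1, zero_add]

lemma DPC.S2all
    (hple : rate d K h σ N V ((Move.pos j).act h i) (Move.pos j) ≤ rate d K h σ N V i (Move.pos j))
    (hmle : rate d K h σ N V i (Move.neg j) ≤ rate d K h σ N V ((Move.pos j).act h i) (Move.neg j))
    (b : Move d) :
    ∑ g : Option (Move d), crate d K h σ N V i j g (some b)
      = rate d K h σ N V ((Move.pos j).act h i) b := by
  classical
  rw [Fintype.sum_option, DPC.sum_move_split j]
  by_cases hbp : b = Move.pos j
  · subst hbp
    have h1 : crate d K h σ N V i j none (some (Move.pos j)) = 0 := by simp [crate]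
    have h2 : crate d K h σ N V i j (some (Move.pos j)) (some (Move.pos j))
        = rate d K h σ N V ((Move.pos j).act h i) (Move.pos j) := by
      simp [crate, min_eq_right hple]
    have h3 : crate d K h σ N V i j (some (Move.neg j)) (some (Move.pos j)) = 0 := by
      simp [crate, Move.dir]
    have h4 : ∑ a ∈ Finset.univ.filter (fun γ : Move d => γ.dir ≠ j),
        crate d K h σ N V i j (some a) (some (Move.pos j)) = 0 := by
      refine Finset.sum_eq_zero fun a ha => ?_
      simp only [Finset.mem_filter, Finset.mem_univ, true_and] at ha
      have hne : a ≠ Move.pos j := by rintro rfl; exact ha rfl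
      simp [crate, hne, Move.dir, ha]
    rw [h1, h2, h3, h4]; ring
  · by_cases hbn : b = Move.neg j
    · subst hbn
      have h1 : crate d K h σ N V i j none (some (Move.neg j))
          = kminus d K h σ N V ((Move.pos j).act h i) j := by simp [crate]
      have h2 : crate d K h σ N V i j (some (Move.pos j)) (some (Move.neg j)) = 0 := by
        simp [crate, Move.dir]
      have h3 : crate d K h σ N V i j (some (Move.neg j)) (some (Move.neg j))
          = rate d K h σ N V i (Move.neg j) := by
        simp [crate, min_eq_left hmle]
      have h4 : ∑ a ∈ Finset.univ.filter (fun γ : Move d => γ.dir ≠ j),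
          crate d K h σ N V i j (some a) (some (Move.neg j))
          = ∑ a ∈ Finset.univ.filter (fun γ : Move d => γ.dir ≠ j),
            max (rate d K h σ N V i a - rate d K h σ N V ((Move.pos j).act h i) a) 0 := by
        refine Finset.sum_congr rfl fun a ha => ?_
        simp only [Finset.mem_filter, Finset.mem_univ, true_and] at ha
        have hne : a ≠ Move.neg j := by rintro rfl; exact ha rfl
        have hnp : a ≠ Move.pos j := by rintro rfl; exact ha rfl
        simp [crate, hne, hnp, ha]
      rw [h1, h2, h3, h4]
      have hd : kminus d K h σ N V ((Move.pos j).act h i) j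
          = rate d K h σ N V ((Move.pos j).act h i) (Move.neg j)
            - rate d K h σ N V i (Move.neg j)
            - ∑ a ∈ Finset.univ.filter (fun γ : Move d => γ.dir ≠ j),
              max (rate d K h σ N V i a - rate d K h σ N V ((Move.pos j).act h i) a) 0 := by
        simp only [kminus, DPC.neg_act_pos]
      rw [hd]; ring
    · have hbd : b.dir ≠ j := DPC.dir_ne b hbp hbn
      have h1 : crate d K h σ N V i j none (some b) = 0 := by simp [crate, hbn]
      have h2 : crate d K h σ N V i j (some (Move.pos j)) (some b)
          = max (rate d K h σ N V ((Move.pos j).act h i) b - rate d K h σ N V i b) 0 := by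
        have : Move.pos j ≠ b := fun hh => hbp hh.symm
        simp [crate, this, hbd]
      have h3 : crate d K h σ N V i j (some (Move.neg j)) (some b) = 0 := by
        have : Move.neg j ≠ b := fun hh => hbn hh.symm
        simp [crate, this, hbn, Move.dir]
      have h4 : ∑ a ∈ Finset.univ.filter (fun γ : Move d => γ.dir ≠ j),
          crate d K h σ N V i j (some a) (some b)
          = min (rate d K h σ N V i b)
              (rate d K h σ N V ((Move.pos j).act h i) b) := by
        rw [Finset.sum_eq_single_of_mem b (by simp [Finset.mem_filter, hbd])]
        · simp [crate]
        · intro a ha hne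
          simp only [Finset.mem_filter, Finset.mem_univ, true_and] at ha
          have hnp : a ≠ Move.pos j := by rintro rfl; exact ha rfl
          simp [crate, hne, hnp, hbn]
      rw [h1, h2, h3, h4]
      rcases le_total (rate d K h σ N V i b) (rate d K h σ N V ((Move.pos j).act h i) b)
        with hab | hab
      · rw [min_eq_left hab, max_eq_left (by linarith)]; ring
      · rw [min_eq_right hab, max_eq_right (by linarith)]; ring

lemma DPC.crate_nonneg
    (hkp : 0 ≤ kplus d K h σ N V i j)
    (hkm : 0 ≤ kminus d K h σ N V ((Move.pos j).act h i) j)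
    (a b : Option (Move d)) : 0 ≤ crate d K h σ N V i j a b := by
  rcases a with _ | a <;> rcases b with _ | b
  · simp [crate]
  · simp only [crate]; split
    · exact hkm
    · exact le_refl 0
  · simp only [crate]; split
    · exact hkp
    · exact le_refl 0
  · simp only [crate]
    split
    · exact le_min (DPC.rate_nonneg _ _ _ _ _ _ _) (DPC.rate_nonneg _ _ _ _ _ _ _)
    · split
      · exact le_max_right _ _
      · split
        · exact le_max_right _ _
        · exact le_refl 0

end Aux3
set_option maxHeartbeats 1000000 in
/-- One-step path-coupling contraction for the discrete-time kernel. -/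
theorem discrete_path_coupling_contraction
    (d : ℕ) (K h σ : ℝ) (N : ℕ) (V : Pt d → ℝ) (hp : Params d K h σ N V)
    (hA3 : A3 d K h σ N V) (j : Fin d) (i : Pt d)
    (hi : i ∈ grid d K h N) (hij : (Move.pos j).act h i ∈ grid d K h N) :
    (∀ q : Option (Move d) × Option (Move d), 0 ≤ pcoup d K h σ N V i j q) ∧
    (∑ q : Option (Move d) × Option (Move d), pcoup d K h σ N V i j q = 1) ∧
    (∀ x ∈ grid d K h N,
      (∑ q : Option (Move d) × Option (Move d),
          if actO h q.1 i = x then pcoup d K h σ N V i j q else 0)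
        = piKernel d K h σ N V i x) ∧
    (∀ x ∈ grid d K h N,
      (∑ q : Option (Move d) × Option (Move d),
          if actO h q.2 ((Move.pos j).act h i) = x then pcoup d K h σ N V i j q else 0)
        = piKernel d K h σ N V ((Move.pos j).act h i) x) ∧
    (∑ q : Option (Move d) × Option (Move d),
        pcoup d K h σ N V i j q
          * graphDist (actO h q.1 i) (actO h q.2 ((Move.pos j).act h i)))
      ≤ (1 - kappaPhi d K h σ N V * tauStep d K h σ N V)
          * graphDist i ((Move.pos j).act h i) ∧
    graphDist i ((Move.pos j).act h i) = h := by
  classical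
  obtain ⟨hd, hK, hh, hNh, hσ, hV⟩ := hp
  have hni : (Move.neg j).act h ((Move.pos j).act h i) = i := DPC.neg_act_pos
  have hkp : 0 < kplus d K h σ N V i j := hA3.1 j i hi hij
  have hkm : 0 < kminus d K h σ N V ((Move.pos j).act h i) j := hA3.2 j ((Move.pos j).act h i) hij (by rw [hni]; exact hi)
  have hmaxp : 0 ≤ ∑ γ ∈ Finset.univ.filter (fun γ : Move d => γ.dir ≠ j),
      max (rate d K h σ N V ((Move.pos j).act h i) γ - rate d K h σ N V i γ) 0 :=
    Finset.sum_nonneg fun γ _ => le_max_right _ _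
  have hmaxm : 0 ≤ ∑ γ ∈ Finset.univ.filter (fun γ : Move d => γ.dir ≠ j),
      max (rate d K h σ N V i γ - rate d K h σ N V ((Move.pos j).act h i) γ) 0 :=
    Finset.sum_nonneg fun γ _ => le_max_right _ _
  have hkp' : kplus d K h σ N V i j = rate d K h σ N V i (Move.pos j) - rate d K h σ N V ((Move.pos j).act h i) (Move.pos j)
      - ∑ γ ∈ Finset.univ.filter (fun γ : Move d => γ.dir ≠ j),
        max (rate d K h σ N V ((Move.pos j).act h i) γ - rate d K h σ N V i γ) 0 := by simp only [kplus]
  have hkm' : kminus d K h σ N V ((Move.pos j).act h i) j = rate d K h σ N V ((Move.pos j).act h i) (Move.neg j) - rate d K h σ N V i (Move.neg j)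
      - ∑ γ ∈ Finset.univ.filter (fun γ : Move d => γ.dir ≠ j),
        max (rate d K h σ N V i γ - rate d K h σ N V ((Move.pos j).act h i) γ) 0 := by simp only [kminus, hni]
  have hple : rate d K h σ N V ((Move.pos j).act h i) (Move.pos j) ≤ rate d K h σ N V i (Move.pos j) := by
    rw [hkp'] at hkp; linarith
  have hmle : rate d K h σ N V i (Move.neg j) ≤ rate d K h σ N V ((Move.pos j).act h i) (Move.neg j) := by
    rw [hkm'] at hkm; linarith
  have hkple : kplus d K h σ N V i j ≤ rate d K h σ N V i (Move.pos j) := by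
    rw [hkp']
    have := DPC.rate_nonneg K h σ N V ((Move.pos j).act h i) (Move.pos j); linarith
  have hkmle : kminus d K h σ N V ((Move.pos j).act h i) j ≤ rate d K h σ N V ((Move.pos j).act h i) (Move.neg j) := by
    rw [hkm']
    have := DPC.rate_nonneg K h σ N V i (Move.neg j); linarith
  have hbddT : BddAbove ((fun x => ∑ γ : Move d, rate d K h σ N V x γ) '' ↑(grid d K h N)) :=
    (Set.Finite.image _ (grid d K h N).finite_toSet).bddAbove
  have hhalf : ∀ x ∈ grid d K h N, ∑ γ : Move d, rate d K h σ N V x γ ≤ Tcal d K h σ N V / 2 := by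
    intro x hx
    have := le_csSup hbddT ⟨x, hx, rfl⟩
    simp only [Tcal]; linarith
  have hTpos : 0 < Tcal d K h σ N V := by
    have h1 : 0 < rate d K h σ N V i (Move.pos j) := DPC.rate_pos hh hσ hi hij
    have h2 : rate d K h σ N V i (Move.pos j) ≤ ∑ γ : Move d, rate d K h σ N V i γ :=
      Finset.single_le_sum (fun γ _ => DPC.rate_nonneg K h σ N V i γ) (Finset.mem_univ _)
    have h3 := hhalf i hi
    linarith
  have hT0 : Tcal d K h σ N V ≠ 0 := ne_of_gt hTpos
  have hS1 := DPC.S1all hple hmle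
  have hS2 := DPC.S2all hple hmle
  have hTot1 : ∑ q : Option (Move d) × Option (Move d), crate d K h σ N V i j q.1 q.2
      = (∑ a : Move d, rate d K h σ N V i a) + kminus d K h σ N V ((Move.pos j).act h i) j := by
    rw [Fintype.sum_prod_type, Fintype.sum_option, DPC.S1none]
    simp only [hS1]; ring
  have hTot2 : ∑ q : Option (Move d) × Option (Move d), crate d K h σ N V i j q.1 q.2
      = (∑ b : Move d, rate d K h σ N V ((Move.pos j).act h i) b) + kplus d K h σ N V i j := by
    rw [Fintype.sum_prod_type_right, Fintype.sum_option, DPC.S2none]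
    simp only [hS2]; ring
  have hFil : ∑ q ∈ Finset.univ.filter
        (fun q : Option (Move d) × Option (Move d) => q ≠ (none, none)), crate d K h σ N V i j q.1 q.2
      = ∑ q : Option (Move d) × Option (Move d), crate d K h σ N V i j q.1 q.2 := by
    rw [Finset.sum_filter]
    refine Finset.sum_congr rfl fun q _ => ?_
    by_cases hq : q = (none, none)
    · subst hq; simp [crate]
    · simp [hq]
  have hpEE : pcoup d K h σ N V i j (none, none) = 1 - ((∑ a : Move d, rate d K h σ N V i a) + kminus d K h σ N V ((Move.pos j).act h i) j) / Tcal d K h σ N V := by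
    simp only [pcoup, if_pos rfl]
    rw [← Finset.sum_div, hFil, hTot1]
    simp
  have hpA : pcoup d K h σ N V i j (some (Move.pos j), none) = kplus d K h σ N V i j / Tcal d K h σ N V := by
    rw [pcoup, if_neg (by simp)]
    simp [crate]
  have hpB : pcoup d K h σ N V i j (none, some (Move.neg j)) = kminus d K h σ N V ((Move.pos j).act h i) j / Tcal d K h σ N V := by
    rw [pcoup, if_neg (by simp)]
    simp [crate]
  have hnn : ∀ q : Option (Move d) × Option (Move d), 0 ≤ pcoup d K h σ N V i j q := by
    intro q
    by_cases hq : q = (none, none)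
    · subst hq; rw [hpEE]
      have hb1 := hhalf i hi
      have hb2 := hhalf ((Move.pos j).act h i) hij
      have h2 : rate d K h σ N V ((Move.pos j).act h i) (Move.neg j) ≤ ∑ γ : Move d, rate d K h σ N V ((Move.pos j).act h i) γ :=
        Finset.single_le_sum (fun γ _ => DPC.rate_nonneg K h σ N V ((Move.pos j).act h i) γ) (Finset.mem_univ _)
      have hle : (∑ a : Move d, rate d K h σ N V i a) + kminus d K h σ N V ((Move.pos j).act h i) j ≤ Tcal d K h σ N V := by linarith
      have := (div_le_one hTpos).mpr hle
      linarith
    · rw [pcoup, if_neg hq]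
      exact div_nonneg (DPC.crate_nonneg hkp.le hkm.le _ _) hTpos.le
  have hsum1 : ∑ q : Option (Move d) × Option (Move d), pcoup d K h σ N V i j q = 1 := by
    rw [← Finset.sum_filter_add_sum_filter_not Finset.univ
      (fun q : Option (Move d) × Option (Move d) => q = (none, none))]
    have e1 : ∑ q ∈ Finset.univ.filter
        (fun q : Option (Move d) × Option (Move d) => q = (none, none)), pcoup d K h σ N V i j q
        = pcoup d K h σ N V i j (none, none) := by
      rw [Finset.filter_eq']; simp
    have e2 : ∑ q ∈ Finset.univ.filter
        (fun q : Option (Move d) × Option (Move d) => ¬q = (none, none)), pcoup d K h σ N V i j q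
        = ∑ q ∈ Finset.univ.filter
            (fun q : Option (Move d) × Option (Move d) => q ≠ (none, none)),
          crate d K h σ N V i j q.1 q.2 / Tcal d K h σ N V := by
      refine Finset.sum_congr rfl fun q hq => ?_
      rw [pcoup, if_neg (Finset.mem_filter.mp hq).2]
    rw [e1, e2, hpEE, ← Finset.sum_div, hFil, hTot1]
    ring
  have hDii : graphDist i ((Move.pos j).act h i) = h := by
    show graphDist i (i + EuclideanSpace.single j h) = h
    rw [DPC.graphDist_single, abs_of_pos hh]
  refine ⟨hnn, hsum1, ?_, ?_, ?_, hDii⟩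
  · -- first marginal
    intro x hx
    rw [Fintype.sum_prod_type]
    have inner : ∀ γ : Option (Move d),
        (∑ γb : Option (Move d), if actO h (γ, γb).1 i = x then pcoup d K h σ N V i j (γ, γb) else 0)
        = if actO h γ i = x then (∑ γb : Option (Move d), pcoup d K h σ N V i j (γ, γb)) else 0 := by
      intro γ
      by_cases hc : actO h γ i = x
      · rw [if_pos hc]
        exact Finset.sum_congr rfl fun γb _ => if_pos hc
      · rw [if_neg hc]
        exact Finset.sum_eq_zero fun γb _ => if_neg hc
    simp only [inner]
    rw [Fintype.sum_option]
    have hProw : ∀ a : Move d, ∑ γb : Option (Move d), pcoup d K h σ N V i j (some a, γb) = rate d K h σ N V i a / Tcal d K h σ N V := by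
      intro a
      have e : ∀ γb : Option (Move d), pcoup d K h σ N V i j (some a, γb) = crate d K h σ N V i j (some a) γb / Tcal d K h σ N V := by
        intro γb; rw [pcoup, if_neg (by simp)]
      simp only [e]
      rw [← Finset.sum_div, hS1]
    have hPnone : ∑ γb : Option (Move d), pcoup d K h σ N V i j (none, γb)
        = 1 - (∑ a : Move d, rate d K h σ N V i a) / Tcal d K h σ N V := by
      rw [Fintype.sum_option, hpEE]
      have h1 : ∑ b : Move d, pcoup d K h σ N V i j (none, some b) = kminus d K h σ N V ((Move.pos j).act h i) j / Tcal d K h σ N V := by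
        have e : ∀ b : Move d, pcoup d K h σ N V i j (none, some b) = crate d K h σ N V i j none (some b) / Tcal d K h σ N V := by
          intro b; rw [pcoup, if_neg (by simp)]
        simp only [e]
        rw [← Finset.sum_div]
        congr 1
        rw [Finset.sum_eq_single_of_mem (Move.neg j) (Finset.mem_univ _)]
        · simp [crate]
        · intro b _ hne; simp [crate, hne]
      rw [h1, add_div]
      ring
    simp only [hProw, hPnone]
    rw [piKernel]
    simp only [prate, actO]
    rw [show (∑ γ : Move d, rate d K h σ N V i γ / Tcal d K h σ N V) = (∑ γ : Move d, rate d K h σ N V i γ) / Tcal d K h σ N V from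
      (Finset.sum_div _ _ _).symm]
    ring
  · -- second marginal
    intro x hx
    rw [Fintype.sum_prod_type_right]
    have inner : ∀ γb : Option (Move d),
        (∑ γ : Option (Move d),
          if actO h (γ, γb).2 ((Move.pos j).act h i) = x then pcoup d K h σ N V i j (γ, γb) else 0)
        = if actO h γb ((Move.pos j).act h i) = x
            then (∑ γ : Option (Move d), pcoup d K h σ N V i j (γ, γb)) else 0 := by
      intro γb
      by_cases hc : actO h γb ((Move.pos j).act h i) = x
      · rw [if_pos hc]
        exact Finset.sum_congr rfl fun γ _ => if_pos hc
      · rw [if_neg hc]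
        exact Finset.sum_eq_zero fun γ _ => if_neg hc
    simp only [inner]
    rw [Fintype.sum_option]
    have hPcol : ∀ b : Move d, ∑ γ : Option (Move d), pcoup d K h σ N V i j (γ, some b) = rate d K h σ N V ((Move.pos j).act h i) b / Tcal d K h σ N V := by
      intro b
      have e : ∀ γ : Option (Move d), pcoup d K h σ N V i j (γ, some b) = crate d K h σ N V i j γ (some b) / Tcal d K h σ N V := by
        intro γ; rw [pcoup, if_neg (by simp)]
      simp only [e]
      rw [← Finset.sum_div, hS2]
    have hPnone : ∑ γ : Option (Move d), pcoup d K h σ N V i j (γ, none)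
        = 1 - (∑ b : Move d, rate d K h σ N V ((Move.pos j).act h i) b) / Tcal d K h σ N V := by
      rw [Fintype.sum_option, hpEE]
      have h1 : ∑ a : Move d, pcoup d K h σ N V i j (some a, none) = kplus d K h σ N V i j / Tcal d K h σ N V := by
        have e : ∀ a : Move d, pcoup d K h σ N V i j (some a, none) = crate d K h σ N V i j (some a) none / Tcal d K h σ N V := by
          intro a; rw [pcoup, if_neg (by simp)]
        simp only [e]
        rw [← Finset.sum_div]
        congr 1
        rw [Finset.sum_eq_single_of_mem (Move.pos j) (Finset.mem_univ _)]
        · simp [crate]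
        · intro a _ hne; simp [crate, hne]
      rw [h1]
      have hTT : (∑ a : Move d, rate d K h σ N V i a) + kminus d K h σ N V ((Move.pos j).act h i) j = (∑ b : Move d, rate d K h σ N V ((Move.pos j).act h i) b) + kplus d K h σ N V i j := by
        rw [← hTot1, ← hTot2]
      rw [hTT, add_div]
      ring
    simp only [hPcol, hPnone]
    rw [piKernel]
    simp only [prate, actO]
    rw [show (∑ γ : Move d, rate d K h σ N V ((Move.pos j).act h i) γ / Tcal d K h σ N V) = (∑ γ : Move d, rate d K h σ N V ((Move.pos j).act h i) γ) / Tcal d K h σ N V from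
      (Finset.sum_div _ _ _).symm]
    ring
  · -- contraction
    have hκ : kappaPhi d K h σ N V ≤ kplus d K h σ N V i j + kminus d K h σ N V ((Move.pos j).act h i) j := by
      have hbdd : BddBelow {r : ℝ | ∃ j' : Fin d, ∃ i' ∈ grid d K h N,
          (Move.pos j').act h i' ∈ grid d K h N ∧
          r = kplus d K h σ N V i' j' + kminus d K h σ N V ((Move.pos j').act h i') j'} := by
        apply Set.Finite.bddBelow
        apply Set.Finite.subset (Set.finite_range
          (fun p : Fin d × {x // x ∈ grid d K h N} =>
            kplus d K h σ N V p.2.1 p.1 + kminus d K h σ N V ((Move.pos p.1).act h p.2.1) p.1))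
        rintro r ⟨j', i0, hi0, _, rfl⟩
        exact ⟨(j', ⟨i0, hi0⟩), rfl⟩
      exact csInf_le hbdd ⟨j, i, hi, hij, rfl⟩
    have key : ∀ q : Option (Move d) × Option (Move d),
        pcoup d K h σ N V i j q * graphDist (actO h q.1 i) (actO h q.2 ((Move.pos j).act h i))
        ≤ (pcoup d K h σ N V i j q
            - (if q = ((some (Move.pos j) : Option (Move d)), (none : Option (Move d)))
                then pcoup d K h σ N V i j q else 0)
            - (if q = ((none : Option (Move d)), (some (Move.neg j) : Option (Move d)))
                then pcoup d K h σ N V i j q else 0)) * h := by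
      intro q
      by_cases hqA : q = ((some (Move.pos j) : Option (Move d)), (none : Option (Move d)))
      · subst hqA
        rw [if_pos rfl, if_neg (by simp)]
        have hD : graphDist (actO h (some (Move.pos j)) i)
            (actO h (none : Option (Move d)) ((Move.pos j).act h i)) = 0 := by
          simp [actO, graphDist]
        rw [hD]
        simp
      · by_cases hqB : q = ((none : Option (Move d)), (some (Move.neg j) : Option (Move d)))
        · subst hqB
          rw [if_neg (by simp), if_pos rfl]
          have hD : graphDist (actO h (none : Option (Move d)) i)
              (actO h (some (Move.neg j)) ((Move.pos j).act h i)) = 0 := by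
            simp only [actO, hni]
            simp [graphDist]
          rw [hD]
          simp
        · rw [if_neg hqA, if_neg hqB]
          obtain ⟨γ, γb⟩ := q
          have hp0 := hnn (γ, γb)
          rcases γ with _ | a <;> rcases γb with _ | b
          · have hD : graphDist (actO h (none : Option (Move d)) i)
                (actO h (none : Option (Move d)) ((Move.pos j).act h i)) = h := by
              simpa [actO] using hDii
            rw [hD]
            simp
          · have hb : b ≠ Move.neg j := by
              intro hb; exact hqB (by rw [hb])
            have hp : pcoup d K h σ N V i j (none, some b) = 0 := by
              rw [pcoup, if_neg (by simp)]
              simp [crate, hb]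
            rw [hp]
            simp
          · have ha : a ≠ Move.pos j := by
              intro ha; exact hqA (by rw [ha])
            have hp : pcoup d K h σ N V i j (some a, none) = 0 := by
              rw [pcoup, if_neg (by simp)]
              simp [crate, ha]
            rw [hp]
            simp
          · have hD : graphDist (actO h (some a) i)
                (actO h (some b) ((Move.pos j).act h i)) ≤ h ∨ pcoup d K h σ N V i j (some a, some b) = 0 := by
              by_cases hab : a = b
              · subst hab
                left
                cases a with
                | pos k =>
                    simp only [actO, Move.act]
                    rw [DPC.graphDist_add_right, DPC.graphDist_single, abs_of_pos hh]
                | neg k =>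
                    simp only [actO, Move.act, sub_eq_add_neg]
                    rw [DPC.graphDist_add_right, DPC.graphDist_single, abs_of_pos hh]
              · by_cases h2 : a = Move.pos j ∧ b.dir ≠ j
                · left
                  obtain ⟨rfl, -⟩ := h2
                  cases b with
                  | pos k =>
                      simp only [actO, Move.act]
                      rw [DPC.graphDist_single, abs_of_pos hh]
                  | neg k =>
                      simp only [actO, Move.act]
                      rw [DPC.graphDist_single', abs_of_pos hh]
                · by_cases h3 : a.dir ≠ j ∧ b = Move.neg j
                  · left
                    obtain ⟨-, rfl⟩ := h3
                    show graphDist (actO h (some a) i)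
                      ((Move.neg j).act h ((Move.pos j).act h i)) ≤ h
                    rw [hni, DPC.graphDist_symm]
                    cases a with
                    | pos k =>
                        simp only [actO, Move.act]
                        rw [DPC.graphDist_single, abs_of_pos hh]
                    | neg k =>
                        simp only [actO, Move.act]
                        rw [DPC.graphDist_single', abs_of_pos hh]
                  · right
                    rw [pcoup, if_neg (by simp)]
                    simp [crate, hab, h2, h3]
            rcases hD with hD | hp
            · calc pcoup d K h σ N V i j (some a, some b)
                  * graphDist (actO h (some a) i) (actO h (some b) ((Move.pos j).act h i))
                  ≤ pcoup d K h σ N V i j (some a, some b) * h := mul_le_mul_of_nonneg_left hD hp0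
                _ = (pcoup d K h σ N V i j (some a, some b) - 0 - 0) * h := by ring
            · rw [hp]
              simp
    calc ∑ q : Option (Move d) × Option (Move d),
          pcoup d K h σ N V i j q * graphDist (actO h q.1 i) (actO h q.2 ((Move.pos j).act h i))
        ≤ ∑ q : Option (Move d) × Option (Move d),
            (pcoup d K h σ N V i j q
              - (if q = ((some (Move.pos j) : Option (Move d)), (none : Option (Move d)))
                  then pcoup d K h σ N V i j q else 0)
              - (if q = ((none : Option (Move d)), (some (Move.neg j) : Option (Move d)))
                  then pcoup d K h σ N V i j q else 0)) * h :=
          Finset.sum_le_sum fun q _ => key q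
      _ = (1 - kplus d K h σ N V i j / Tcal d K h σ N V - kminus d K h σ N V ((Move.pos j).act h i) j / Tcal d K h σ N V) * h := by
          simp only [sub_mul]
          rw [Finset.sum_sub_distrib, Finset.sum_sub_distrib, ← Finset.sum_mul]
          simp only [ite_mul, zero_mul]
          rw [Finset.sum_ite_eq' Finset.univ _ (fun q => pcoup d K h σ N V i j q * h),
            Finset.sum_ite_eq' Finset.univ _ (fun q => pcoup d K h σ N V i j q * h)]
          simp only [Finset.mem_univ, if_true]
          rw [hsum1, hpA, hpB]
      _ ≤ (1 - kappaPhi d K h σ N V * tauStep d K h σ N V)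
            * graphDist i ((Move.pos j).act h i) := by
          rw [hDii]
          have ht : tauStep d K h σ N V = 1 / Tcal d K h σ N V := rfl
          have h1 : kappaPhi d K h σ N V * tauStep d K h σ N V ≤ kplus d K h σ N V i j / Tcal d K h σ N V + kminus d K h σ N V ((Move.pos j).act h i) j / Tcal d K h σ N V := by
            rw [ht]
            calc kappaPhi d K h σ N V * (1 / Tcal d K h σ N V) = kappaPhi d K h σ N V / Tcal d K h σ N V := by ring
              _ ≤ (kplus d K h σ N V i j + kminus d K h σ N V ((Move.pos j).act h i) j) / Tcal d K h σ N V := (div_le_div_iff_of_pos_right hTpos).mpr hκ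
              _ = kplus d K h σ N V i j / Tcal d K h σ N V + kminus d K h σ N V ((Move.pos j).act h i) j / Tcal d K h σ N V := add_div _ _ _
          nlinarith [hh.le]
end
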